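/- arXiv:2307.09736 — 4 statements merged into one kernel-verified Lean document; each statement's English description precedes it below -/
import Mathlib

section
/- Let n, k, m be positive integers with k ≥ 2 and m ≥ 2. If m·(⌈((n−1)k² + k + 2m − 1)/m⌉ − 1) is divisible by k, then M_m(K_{2,n}; k) ≤ ⌈((n−1)k² + k + 2m − 1)/m⌉. -/
open Finset Matrix

/-- The complete multipartite graph `K_{c×s}` with `c` partite sets, each of size `s`,
on the vertex set `Fin c × Fin s`. -/
def multiK (c s : ℕ) : SimpleGraph (Fin c × Fin s) where
  Adj v w := v.1 ≠ w.1
  symm := ⟨fun _ _ h => Ne.symm h⟩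
  loopless := ⟨fun _ h => h rfl⟩

/-- The symmetric edge `k`-coloring `C` of the graph `G` contains a monochromatic copy of the
complete bipartite graph `K_{2,n}` in color `i`: there are two distinct vertices `a b` and a
set `S` of `n` further vertices all joined to both `a` and `b` by edges of color `i`. -/
def HasMonoK2 {V : Type*} (G : SimpleGraph V) {k : ℕ}
    (C : V → V → Fin k) (i : Fin k) (n : ℕ) : Prop :=
  ∃ (a b : V) (S : Finset V), a ≠ b ∧ a ∉ S ∧ b ∉ S ∧ S.card = n ∧
    ∀ v ∈ S, G.Adj a v ∧ G.Adj b v ∧ C a v = i ∧ C b v = i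

/-- Every symmetric `k`-coloring of the edges of `K_{c×s}` contains a monochromatic copy of
`K_{2, ns i}` in some color `i`. -/
def ArrowsVec (c s k : ℕ) (ns : Fin k → ℕ) : Prop :=
  ∀ C : (Fin c × Fin s) → (Fin c × Fin s) → Fin k,
    (∀ v w, C v w = C w v) → ∃ i : Fin k, HasMonoK2 (multiK c s) C i (ns i)

/-- Every symmetric `k`-coloring of the edges of `K_{c×s}` contains a monochromatic `K_{2,n}`. -/
def Arrows (c s n k : ℕ) : Prop := ArrowsVec c s k (fun _ => n)

/-- The set multipartite Ramsey number `M_s(K_{2,n}; k)`: the smallest positive integer `c` such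
that every `k`-coloring of the edges of `K_{c×s}` contains a monochromatic `K_{2,n}`. -/
noncomputable def setRamsey (s n k : ℕ) : ℕ := sInf {c : ℕ | 0 < c ∧ Arrows c s n k}

/-- The size multipartite Ramsey number `m_c(K_{2,n}; k)`: the smallest positive integer `s` such
that every `k`-coloring of the edges of `K_{c×s}` contains a monochromatic `K_{2,n}`. -/
noncomputable def sizeRamsey (c n k : ℕ) : ℕ := sInf {s : ℕ | 0 < s ∧ Arrows c s n k}

/-- The size multipartite Ramsey number `m_c(K_{2,n₁},…,K_{2,n_k})`. -/
noncomputable def sizeRamseyVec (c k : ℕ) (ns : Fin k → ℕ) : ℕ :=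
  sInf {s : ℕ | 0 < s ∧ ArrowsVec c s k ns}

/-- All entries of the matrix `H` are `1` or `-1`. -/
def PMOne {ι : Type*} (H : Matrix ι ι ℤ) : Prop := ∀ i j, H i j = 1 ∨ H i j = -1

/-- `H` is an `[α]`-Hadamard matrix: a square `±1` matrix such that `α` is an upper bound for
`|(H * Hᵀ) i j|` over all pairs `i ≠ j`. -/
def IsBHadamard {ι : Type*} [Fintype ι] (α : ℕ) (H : Matrix ι ι ℤ) : Prop :=
  PMOne H ∧ ∀ i j, i ≠ j → |(H * Hᵀ) i j| ≤ (α : ℤ)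

/-- `H` is an `α`-Hadamard matrix: a square `±1` matrix such that `α` is the maximum of
`|(H * Hᵀ) i j|` over all pairs `i ≠ j`. -/
def IsEHadamard {ι : Type*} [Fintype ι] (α : ℕ) (H : Matrix ι ι ℤ) : Prop :=
  IsBHadamard α H ∧ ∃ i j, i ≠ j ∧ |(H * Hᵀ) i j| = (α : ℤ)

/-- `H` is a Hadamard matrix: a square `±1` matrix with `H * Hᵀ = ζ • 1`. -/
def IsHadamard {ι : Type*} [Fintype ι] [DecidableEq ι] (H : Matrix ι ι ℤ) : Prop :=
  PMOne H ∧ H * Hᵀ = (Fintype.card ι : ℤ) • (1 : Matrix ι ι ℤ)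


lemma arrows_of_count (n k m c : ℕ) (hn : 1 ≤ n) (hk : 1 ≤ k) (hm : 1 ≤ m) (hc : 1 ≤ c)
    (t : ℕ) (ht : m * (c - 1) = k * t)
    (hineq : ((n:ℤ) - 1) * ((c:ℤ) * m - 1) < (t:ℤ) * ((t:ℤ) - 1)) :
    Arrows c m n k := by
  classical
  intro C hsym
  by_contra hno
  push_neg at hno
  -- Step A : no color class contains K_{2,n}
  have stepA : ∀ (a b : Fin c × Fin m), a ≠ b → ∀ i : Fin k,
      (univ.filter fun v => (multiK c m).Adj a v ∧ (multiK c m).Adj b v ∧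
        C a v = i ∧ C b v = i).card ≤ n - 1 := by
    intro a b hab i
    by_contra hcard
    push_neg at hcard
    have hn' : n ≤ (univ.filter fun v => (multiK c m).Adj a v ∧ (multiK c m).Adj b v ∧
        C a v = i ∧ C b v = i).card := by omega
    obtain ⟨S, hS, hScard⟩ := Finset.exists_subset_card_eq hn'
    refine hno i ⟨a, b, S, hab, ?_, ?_, hScard, fun v hv => (Finset.mem_filter.mp (hS hv)).2⟩
    · intro haS; exact (multiK c m).irrefl (Finset.mem_filter.mp (hS haS)).2.1
    · intro hbS; exact (multiK c m).irrefl (Finset.mem_filter.mp (hS hbS)).2.2.1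
  -- color neighborhoods
  set Nb : (Fin c × Fin m) → Fin k → Finset (Fin c × Fin m) :=
    fun v i => univ.filter (fun w => (multiK c m).Adj v w ∧ C v w = i) with hNb
  -- degree sum
  have degsum : ∀ v : Fin c × Fin m, ∑ i : Fin k, (Nb v i).card = k * t := by
    intro v
    have h1 : (univ.filter fun w : Fin c × Fin m => (multiK c m).Adj v w).card = (c - 1) * m := by
      have he : (univ.filter fun w : Fin c × Fin m => (multiK c m).Adj v w)
          = (univ.erase v.1) ×ˢ (univ : Finset (Fin m)) := by
        ext w
        rw [Finset.mem_filter]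
        simp [multiK, Finset.mem_erase, eq_comm, ne_comm]
      rw [he, Finset.card_product, Finset.card_erase_of_mem (Finset.mem_univ _)]
      simp
    have h2 := Finset.card_eq_sum_card_fiberwise
      (s := univ.filter fun w : Fin c × Fin m => (multiK c m).Adj v w)
      (t := (univ : Finset (Fin k))) (f := fun w => C v w) (fun x _ => Finset.mem_univ _)
    rw [h1] at h2
    have h3 : ∀ i : Fin k, ((univ.filter fun w : Fin c × Fin m =>
        (multiK c m).Adj v w).filter fun w => C v w = i) = Nb v i := by
      intro i; rw [hNb]; rw [Finset.filter_filter]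
    calc ∑ i : Fin k, (Nb v i).card
        = ∑ i : Fin k, ((univ.filter fun w : Fin c × Fin m =>
            (multiK c m).Adj v w).filter fun w => C v w = i).card := by
          refine Finset.sum_congr rfl fun i _ => ?_; rw [h3]
      _ = (c - 1) * m := h2.symm
      _ = k * t := by rw [Nat.mul_comm]; exact ht
  -- per-vertex lower bound
  have lower : ∀ v : Fin c × Fin m,
      (k : ℤ) * t * (t - 1) ≤ ∑ i : Fin k, ((Nb v i).offDiag.card : ℤ) := by
    intro v
    have hcast : ∀ i : Fin k, ((Nb v i).offDiag.card : ℤ)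
        = ((Nb v i).card : ℤ)^2 - (Nb v i).card := by
      intro i
      rw [Finset.offDiag_card]
      have hle : (Nb v i).card ≤ (Nb v i).card * (Nb v i).card := by
        rcases Nat.eq_zero_or_pos (Nb v i).card with h | h
        · simp [h]
        · exact Nat.le_mul_of_pos_left _ h
      push_cast [Nat.cast_sub hle]
      ring
    have hsum : ∑ i : Fin k, ((Nb v i).card : ℤ) = (k : ℤ) * t := by
      rw [← Nat.cast_sum]
      exact_mod_cast congrArg (Nat.cast : ℕ → ℤ) (degsum v)
    have hcs : (∑ i : Fin k, ((Nb v i).card : ℤ))^2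
        ≤ (Finset.univ : Finset (Fin k)).card * ∑ i : Fin k, ((Nb v i).card : ℤ)^2 :=
      sq_sum_le_card_mul_sum_sq
    rw [hsum, Finset.card_univ, Fintype.card_fin] at hcs
    have hk0 : (0:ℤ) < (k:ℤ) := by exact_mod_cast hk
    have hsq : (k:ℤ) * (t:ℤ)^2 ≤ ∑ i : Fin k, ((Nb v i).card : ℤ)^2 := by
      have := hcs
      nlinarith [this]
    calc (k : ℤ) * t * (t - 1)
        = (k:ℤ) * (t:ℤ)^2 - (k:ℤ) * t := by ring
      _ ≤ (∑ i : Fin k, ((Nb v i).card : ℤ)^2) - ∑ i : Fin k, ((Nb v i).card : ℤ) := by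
          rw [hsum]; linarith
      _ = ∑ i : Fin k, (((Nb v i).card : ℤ)^2 - ((Nb v i).card : ℤ)) := by
          rw [Finset.sum_sub_distrib]
      _ = ∑ i : Fin k, ((Nb v i).offDiag.card : ℤ) := by
          refine Finset.sum_congr rfl fun i _ => (hcast i).symm
  -- the double count: swap sums
  have swap : ∑ v : Fin c × Fin m, ∑ i : Fin k, (Nb v i).offDiag.card
      ≤ (univ : Finset (Fin c × Fin m)).offDiag.card * (k * (n-1)) := by
    have hoff : ∀ (v : Fin c × Fin m) (i : Fin k), (Nb v i).offDiag
        = (univ : Finset (Fin c × Fin m)).offDiag.filter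
            (fun p => p.1 ∈ Nb v i ∧ p.2 ∈ Nb v i) := by
      intro v i
      ext p
      simp only [Finset.mem_offDiag, Finset.mem_filter, Finset.mem_univ, true_and]
      tauto
    calc ∑ v : Fin c × Fin m, ∑ i : Fin k, (Nb v i).offDiag.card
        = ∑ v : Fin c × Fin m, ∑ i : Fin k,
            ∑ p ∈ (univ : Finset (Fin c × Fin m)).offDiag,
              (if p.1 ∈ Nb v i ∧ p.2 ∈ Nb v i then (1:ℕ) else 0) := by
          refine Finset.sum_congr rfl fun v _ => Finset.sum_congr rfl fun i _ => ?_
          rw [hoff v i, Finset.card_filter]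
      _ = ∑ v : Fin c × Fin m, ∑ p ∈ (univ : Finset (Fin c × Fin m)).offDiag, ∑ i : Fin k,
            (if p.1 ∈ Nb v i ∧ p.2 ∈ Nb v i then (1:ℕ) else 0) :=
          Finset.sum_congr rfl fun v _ => Finset.sum_comm
      _ = ∑ p ∈ (univ : Finset (Fin c × Fin m)).offDiag, ∑ v : Fin c × Fin m, ∑ i : Fin k,
            (if p.1 ∈ Nb v i ∧ p.2 ∈ Nb v i then (1:ℕ) else 0) := Finset.sum_comm
      _ = ∑ p ∈ (univ : Finset (Fin c × Fin m)).offDiag, ∑ i : Fin k,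
            ∑ v : Fin c × Fin m, (if p.1 ∈ Nb v i ∧ p.2 ∈ Nb v i then (1:ℕ) else 0) :=
          Finset.sum_congr rfl fun p _ => Finset.sum_comm
      _ ≤ ∑ p ∈ (univ : Finset (Fin c × Fin m)).offDiag, ∑ i : Fin k, (n-1) := by
          refine Finset.sum_le_sum fun p hp => Finset.sum_le_sum fun i _ => ?_
          rw [← Finset.card_filter]
          have hne : p.1 ≠ p.2 := (Finset.mem_offDiag.mp hp).2.2
          have hset : (univ.filter fun v : Fin c × Fin m => p.1 ∈ Nb v i ∧ p.2 ∈ Nb v i)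
              = (univ.filter fun v => (multiK c m).Adj p.1 v ∧ (multiK c m).Adj p.2 v ∧
                  C p.1 v = i ∧ C p.2 v = i) := by
            ext v
            simp only [hNb, Finset.mem_filter, Finset.mem_univ, true_and]
            constructor
            · rintro ⟨⟨h1, h2⟩, ⟨h3, h4⟩⟩
              exact ⟨(multiK c m).adj_symm h1, (multiK c m).adj_symm h3,
                (hsym p.1 v).trans h2, (hsym p.2 v).trans h4⟩
            · rintro ⟨h1, h2, h3, h4⟩
              exact ⟨⟨(multiK c m).adj_symm h1, (hsym v p.1).trans h3⟩,
                ⟨(multiK c m).adj_symm h2, (hsym v p.2).trans h4⟩⟩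
          rw [hset]
          exact stepA p.1 p.2 hne i
      _ = (univ : Finset (Fin c × Fin m)).offDiag.card * (k * (n-1)) := by
          rw [Finset.sum_const, Finset.sum_const, smul_eq_mul, smul_eq_mul,
            Finset.card_univ, Fintype.card_fin]
  -- sizes
  have hNV : (univ : Finset (Fin c × Fin m)).card = c * m := by
    rw [Finset.card_univ]; simp
  have hoffcard : ((univ : Finset (Fin c × Fin m)).offDiag.card : ℤ)
      = (c*m : ℤ) * ((c*m : ℤ) - 1) := by
    rw [Finset.offDiag_card, hNV]
    have hle : c * m ≤ (c*m) * (c*m) := by nlinarith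
    push_cast [Nat.cast_sub hle]
    ring
  -- combine
  have hlow : (c*m : ℤ) * ((k : ℤ) * t * (t - 1))
      ≤ ∑ v : Fin c × Fin m, ∑ i : Fin k, ((Nb v i).offDiag.card : ℤ) := by
    calc (c*m : ℤ) * ((k : ℤ) * t * (t - 1))
        = ∑ _v : Fin c × Fin m, ((k : ℤ) * t * (t - 1)) := by
          rw [Finset.sum_const, Finset.card_univ]
          simp [mul_comm]
      _ ≤ _ := Finset.sum_le_sum fun v _ => lower v
  have hup : (∑ v : Fin c × Fin m, ∑ i : Fin k, ((Nb v i).offDiag.card : ℤ))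
      ≤ (c*m : ℤ) * ((c*m : ℤ) - 1) * ((k:ℤ) * ((n:ℤ)-1)) := by
    have : (∑ v : Fin c × Fin m, ∑ i : Fin k, ((Nb v i).offDiag.card : ℤ))
        = ((∑ v : Fin c × Fin m, ∑ i : Fin k, (Nb v i).offDiag.card : ℕ) : ℤ) := by
      push_cast; ring
    rw [this]
    calc ((∑ v : Fin c × Fin m, ∑ i : Fin k, (Nb v i).offDiag.card : ℕ) : ℤ)
        ≤ (((univ : Finset (Fin c × Fin m)).offDiag.card * (k * (n-1)) : ℕ) : ℤ) := by
          exact_mod_cast swap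
      _ ≤ (c*m : ℤ) * ((c*m : ℤ) - 1) * ((k:ℤ) * ((n:ℤ)-1)) := by
          have h1 : ((n - 1 : ℕ) : ℤ) = (n:ℤ) - 1 := by omega
          rw [Nat.cast_mul, Nat.cast_mul, hoffcard, h1]
  have hcm0 : (0:ℤ) < (c*m : ℤ) := by positivity
  have hk0 : (0:ℤ) < (k:ℤ) := by exact_mod_cast hk
  have h5 := mul_lt_mul_of_pos_left hineq (mul_pos hcm0 hk0)
  nlinarith [hlow.trans hup, h5]

/-- **Theorem.** Let `n, k, m` be positive integers with `k ≥ 2` and `m ≥ 2`. If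
`m * (⌈((n-1)k² + k + 2m - 1)/m⌉ - 1)` is divisible by `k`, then
`M_m(K_{2,n}; k) ≤ ⌈((n-1)k² + k + 2m - 1)/m⌉`. -/
theorem statement14 (n k m : ℕ) (hn : 1 ≤ n) (hk : 2 ≤ k) (hm : 2 ≤ m)
    (hdvd : (k : ℤ) ∣ (m : ℤ) * (⌈(((n : ℚ) - 1) * k ^ 2 + k + 2 * m - 1) / (m : ℚ)⌉ - 1)) :
    (setRamsey m n k : ℤ) ≤ ⌈(((n : ℚ) - 1) * k ^ 2 + k + 2 * m - 1) / (m : ℚ)⌉ := by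
  classical
  set I : ℤ := ⌈(((n : ℚ) - 1) * k ^ 2 + k + 2 * m - 1) / (m : ℚ)⌉ with hI
  have hm0 : (0:ℚ) < (m:ℚ) := by positivity
  have hXpos : (0:ℚ) < ((n : ℚ) - 1) * k ^ 2 + k + 2 * m - 1 := by
    have h1 : (1:ℚ) ≤ (n:ℚ) := by exact_mod_cast hn
    have h2 : (2:ℚ) ≤ (k:ℚ) := by exact_mod_cast hk
    have h3 : (2:ℚ) ≤ (m:ℚ) := by exact_mod_cast hm
    nlinarith [sq_nonneg (k:ℚ)]
  have hI1 : 1 ≤ I := by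
    rw [hI]
    have := Int.ceil_pos.mpr (div_pos hXpos hm0)
    omega
  have hmc : ((n:ℤ) - 1) * k ^ 2 + k + 2 * m - 1 ≤ (m:ℤ) * I := by
    have h1 : (((n : ℚ) - 1) * k ^ 2 + k + 2 * m - 1) / (m : ℚ) ≤ (I:ℚ) := Int.le_ceil _
    have h2 : ((n : ℚ) - 1) * k ^ 2 + k + 2 * m - 1 ≤ (m:ℚ) * I := by
      rw [div_le_iff₀ hm0] at h1; linarith
    exact_mod_cast h2
  obtain ⟨t, ht⟩ := hdvd
  have hk0 : (0:ℤ) < (k:ℤ) := by exact_mod_cast (by omega : 0 < k)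
  have ht0 : 0 ≤ t := by
    nlinarith [ht, hI1, (by exact_mod_cast Nat.zero_le m : (0:ℤ) ≤ (m:ℤ))]
  have hkey : ((n:ℤ) - 1) * ((I:ℤ) * m - 1) < t * (t - 1) := by
    have hk2 : (2:ℤ) ≤ (k:ℤ) := by exact_mod_cast hk
    have hm2 : (2:ℤ) ≤ (m:ℤ) := by exact_mod_cast hm
    have hn1 : (1:ℤ) ≤ (n:ℤ) := by exact_mod_cast hn
    have hmul : (k:ℤ)^2 * (((n:ℤ) - 1) * ((I:ℤ) * m - 1)) < (k:ℤ)^2 * (t * (t-1)) := by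
      have hkt : (k:ℤ) * t = (m:ℤ) * I - m := by rw [← ht]; ring
      have hP : (0:ℤ) ≤ ((n:ℤ)-1) * k^2 := by nlinarith
      have hA : ((n:ℤ)-1)*k^2 + k + 2*m - 1 ≤ (m:ℤ) * I := hmc
      nlinarith [sq_nonneg ((m:ℤ)*I - (((n:ℤ)-1)*k^2 + k + 2*m - 1)),
        mul_nonneg (by linarith : (0:ℤ) ≤ (m:ℤ)*I - (((n:ℤ)-1)*k^2 + k + 2*m - 1))
          (by nlinarith : (0:ℤ) ≤ ((n:ℤ)-1)*k^2 + k + 2*m - 2),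
        mul_nonneg (by linarith : (0:ℤ) ≤ (m:ℤ) - 1) (by linarith : (0:ℤ) ≤ (m:ℤ) + k - 1)]
    exact lt_of_mul_lt_mul_left hmul (by positivity)
  set c : ℕ := I.toNat with hc
  have hcI : (c:ℤ) = I := Int.toNat_of_nonneg (by omega)
  have hc1 : 1 ≤ c := by omega
  have htn : ((t.toNat : ℕ) : ℤ) = t := Int.toNat_of_nonneg ht0
  have ht' : m * (c - 1) = k * t.toNat := by
    have hz : ((m * (c - 1) : ℕ) : ℤ) = ((k * t.toNat : ℕ) : ℤ) := by
      push_cast [Nat.cast_sub hc1]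
      rw [hcI, htn]
      linarith [ht]
    exact_mod_cast hz
  have hineq' : ((n:ℤ) - 1) * ((c:ℤ) * m - 1) < ((t.toNat : ℕ) : ℤ) * (((t.toNat : ℕ) : ℤ) - 1) := by
    rw [hcI, htn, mul_comm (I:ℤ) (m:ℤ)] at *
    linarith [hkey]
  have hArr : Arrows c m n k :=
    arrows_of_count n k m c hn (by omega) (by omega) hc1 t.toNat ht' hineq'
  have hle : setRamsey m n k ≤ c := Nat.sInf_le ⟨by omega, hArr⟩
  calc (setRamsey m n k : ℤ) ≤ (c : ℤ) := by exact_mod_cast hle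
    _ = I := hcI
end

section
/- Let c, k, n₁, …, n_k be positive integers with c ≥ 2, k ≥ 2, n₁ ≥ 2, and set S = n₁ + n₂ + … + n_k. If (c−1)·⌈(ck(S−k) + (c−1)k)/(c−1)²⌉ is divisible by k, then m_c(K_{2,n₁}, K_{2,n₂}, …, K_{2,n_k}) ≤ ⌈(ck(S−k) + (c−1)k)/(c−1)²⌉. -/
open Finset Matrix

section StatementFifteenAux

open Finset

private lemma st15_deg_lemma {c s k : ℕ} (C : (Fin c × Fin s) → (Fin c × Fin s) → Fin k)
    (v : Fin c × Fin s) :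
    ∑ i : Fin k, (univ.filter (fun w : Fin c × Fin s => v.1 ≠ w.1 ∧ C v w = i)).card
      = (c - 1) * s := by
  classical
  have h2 : (univ.filter (fun w : Fin c × Fin s => v.1 ≠ w.1)).card
      = ∑ i : Fin k, ((univ.filter (fun w : Fin c × Fin s => v.1 ≠ w.1)).filter
        (fun w => C v w = i)).card := by
    exact Finset.card_eq_sum_card_fiberwise (fun x _ => mem_univ _)
  simp_rw [Finset.filter_filter] at h2
  rw [← h2]
  have h3 : (univ.filter (fun w : Fin c × Fin s => ¬ v.1 ≠ w.1)) = {v.1} ×ˢ univ := by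
    ext w
    simp only [Finset.mem_filter, Finset.mem_univ, true_and, not_not,
      Finset.mem_product, Finset.mem_singleton]
    constructor
    · intro h; exact ⟨h.symm, trivial⟩
    · intro h; exact h.1.symm
  have h4 := Finset.card_filter_add_card_filter_not
    (s := (univ : Finset (Fin c × Fin s))) (p := fun w => v.1 ≠ w.1)
  rw [h3] at h4
  simp only [Finset.card_product, Finset.card_singleton, Finset.card_univ,
    Fintype.card_fin, one_mul, Fintype.card_prod] at h4
  have hc1 : 1 ≤ c := Fin.pos v.1
  have := Nat.sub_mul c 1 s
  omega

private lemma st15_fubini_lemma {c s k : ℕ} (C : (Fin c × Fin s) → (Fin c × Fin s) → Fin k)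
    (hsym : ∀ v w, C v w = C w v) (i : Fin k) :
    ∑ v : Fin c × Fin s,
        ((univ.filter (fun w : Fin c × Fin s => v.1 ≠ w.1 ∧ C v w = i)).offDiag).card
      = ∑ a : Fin c × Fin s, ∑ b : Fin c × Fin s,
        (if a = b then 0 else
          (univ.filter (fun v : Fin c × Fin s =>
            a.1 ≠ v.1 ∧ b.1 ≠ v.1 ∧ C a v = i ∧ C b v = i)).card) := by
  classical
  have step1 : ∀ v : Fin c × Fin s,
      ((univ.filter (fun w : Fin c × Fin s => v.1 ≠ w.1 ∧ C v w = i)).offDiag).card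
      = ∑ a : Fin c × Fin s, ∑ b : Fin c × Fin s,
          (if a ≠ b ∧ (v.1 ≠ a.1 ∧ C v a = i) ∧ (v.1 ≠ b.1 ∧ C v b = i) then 1 else 0) := by
    intro v
    set M := univ.filter (fun w : Fin c × Fin s => v.1 ≠ w.1 ∧ C v w = i) with hM
    have hoff : M.offDiag = (univ ×ˢ univ).filter
        (fun p : (Fin c × Fin s) × (Fin c × Fin s) =>
          p.1 ≠ p.2 ∧ (v.1 ≠ p.1.1 ∧ C v p.1 = i) ∧ (v.1 ≠ p.2.1 ∧ C v p.2 = i)) := by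
      ext p
      simp only [Finset.mem_offDiag, Finset.mem_filter, Finset.mem_univ, true_and,
        Finset.mem_product, hM]
      tauto
    rw [hoff, Finset.card_filter, Finset.sum_product]
  simp_rw [step1]
  rw [Finset.sum_comm]
  congr 1
  ext a
  rw [Finset.sum_comm]
  congr 1
  ext b
  by_cases hab : a = b
  · simp [hab]
  · rw [if_neg hab, Finset.card_filter]
    congr 1
    ext v
    have h1 : C v a = C a v := hsym v a
    have h2 : C v b = C b v := hsym v b
    refine if_congr ?_ rfl rfl
    constructor
    · rintro ⟨-, ⟨hva, hca⟩, hvb, hcb⟩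
      exact ⟨Ne.symm hva, Ne.symm hvb, h1.symm.trans hca, h2.symm.trans hcb⟩
    · rintro ⟨hav, hbv, hca, hcb⟩
      exact ⟨hab, ⟨Ne.symm hav, h1.trans hca⟩, Ne.symm hbv, h2.trans hcb⟩

private lemma st15_const_sum {c s : ℕ} (m : ℕ) (a : Fin c × Fin s) :
    ∑ b : Fin c × Fin s, (if a = b then 0 else m) = m * (c * s - 1) := by
  classical
  rw [← Finset.sum_erase_add _ _ (Finset.mem_univ a), if_pos rfl, add_zero]
  rw [Finset.sum_congr rfl (fun b hb => if_neg (Ne.symm (Finset.ne_of_mem_erase hb)))]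
  rw [Finset.sum_const, smul_eq_mul, Finset.card_erase_of_mem (Finset.mem_univ a)]
  simp only [Finset.card_univ, Fintype.card_prod, Fintype.card_fin]
  ring

private lemma st15_arrows (c s k : ℕ) (hc : 2 ≤ c) (hk : 2 ≤ k) (hs1 : 1 ≤ s)
    (ns : Fin k → ℕ) (hpos : ∀ i, 1 ≤ ns i) (hS : k + 1 ≤ ∑ i, ns i)
    (hs : ((c:ℤ) * k * ((∑ i, (ns i : ℤ)) - k) + ((c:ℤ) - 1) * k) ≤ ((c:ℤ) - 1)^2 * s) :
    ArrowsVec c s k ns := by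
  classical
  intro C hsym
  by_contra hcon
  push_neg at hcon
  -- no mono copy means every common neighborhood is small
  have hbound : ∀ (i : Fin k) (a b : Fin c × Fin s), a ≠ b →
      (univ.filter (fun v : Fin c × Fin s =>
        a.1 ≠ v.1 ∧ b.1 ≠ v.1 ∧ C a v = i ∧ C b v = i)).card ≤ ns i - 1 := by
    intro i a b hab
    by_contra hle
    push_neg at hle
    have hcard : ns i ≤ (univ.filter (fun v : Fin c × Fin s =>
        a.1 ≠ v.1 ∧ b.1 ≠ v.1 ∧ C a v = i ∧ C b v = i)).card := by
      have := hpos i; omega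
    obtain ⟨S, hSsub, hScard⟩ := Finset.exists_subset_card_eq hcard
    refine hcon i ⟨a, b, S, hab, ?_, ?_, hScard, ?_⟩
    · intro haS
      obtain ⟨-, h, -⟩ := Finset.mem_filter.mp (hSsub haS)
      exact h rfl
    · intro hbS
      obtain ⟨-, -, h, -⟩ := Finset.mem_filter.mp (hSsub hbS)
      exact h rfl
    · intro v hv
      obtain ⟨-, h1, h2, h3, h4⟩ := Finset.mem_filter.mp (hSsub hv)
      exact ⟨h1, h2, h3, h4⟩
  -- color degrees
  set d : Fin k → (Fin c × Fin s) → ℕ := fun i v =>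
    (univ.filter (fun w : Fin c × Fin s => v.1 ≠ w.1 ∧ C v w = i)).card with hd
  have hdeg : ∀ v, ∑ i, d i v = (c - 1) * s := fun v => st15_deg_lemma C v
  -- the double count, nat version
  have hEF : ∀ i : Fin k, ∑ v : Fin c × Fin s, (d i v * d i v - d i v)
      = ∑ a : Fin c × Fin s, ∑ b : Fin c × Fin s,
        (if a = b then 0 else
          (univ.filter (fun v : Fin c × Fin s =>
            a.1 ≠ v.1 ∧ b.1 ≠ v.1 ∧ C a v = i ∧ C b v = i)).card) := by
    intro i
    have h := st15_fubini_lemma C hsym i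
    simp_rw [Finset.offDiag_card] at h
    exact h
  -- nat upper bound per color
  have hupper : ∀ i : Fin k, ∑ v : Fin c × Fin s, (d i v * d i v - d i v)
      ≤ c * s * ((ns i - 1) * (c * s - 1)) := by
    intro i
    rw [hEF i]
    calc ∑ a : Fin c × Fin s, ∑ b : Fin c × Fin s,
          (if a = b then 0 else
            (univ.filter (fun v : Fin c × Fin s =>
              a.1 ≠ v.1 ∧ b.1 ≠ v.1 ∧ C a v = i ∧ C b v = i)).card)
        ≤ ∑ a : Fin c × Fin s, ∑ b : Fin c × Fin s, (if a = b then 0 else ns i - 1) := by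
          refine Finset.sum_le_sum fun a _ => Finset.sum_le_sum fun b _ => ?_
          by_cases hab : a = b
          · simp [hab]
          · rw [if_neg hab, if_neg hab]; exact hbound i a b hab
      _ = ∑ _a : Fin c × Fin s, (ns i - 1) * (c * s - 1) :=
          Finset.sum_congr rfl fun a _ => st15_const_sum _ a
      _ = c * s * ((ns i - 1) * (c * s - 1)) := by
          rw [Finset.sum_const, smul_eq_mul, Finset.card_univ]
          simp [Fintype.card_prod]
  -- move to integers
  have hcast : ∀ (a : ℕ), ((a * a - a : ℕ) : ℤ) = (a : ℤ) ^ 2 - a := by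
    intro a
    have h : a ≤ a * a := by
      rcases Nat.eq_zero_or_pos a with h | h
      · simp [h]
      · exact Nat.le_mul_of_pos_left a h
    push_cast [h]
    ring
  have hc1 : 1 ≤ c := by omega
  have hcs1 : 1 ≤ c * s := Nat.one_le_iff_ne_zero.mpr (by positivity)
  set Sz : ℤ := ∑ i, (ns i : ℤ) with hSz
  set N : ℤ := (c : ℤ) * s with hN
  set D : ℤ := ((c : ℤ) - 1) * s with hD
  -- integer total upper bound
  have hupperZ : ∑ i : Fin k, ∑ v : Fin c × Fin s, ((d i v : ℤ) ^ 2 - d i v)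
      ≤ N * ((Sz - k) * (N - 1)) := by
    have h1 : ∀ i, ∑ v : Fin c × Fin s, ((d i v : ℤ) ^ 2 - d i v)
        ≤ N * (((ns i : ℤ) - 1) * (N - 1)) := by
      intro i
      have h3 : ((∑ v : Fin c × Fin s, (d i v * d i v - d i v) : ℕ) : ℤ)
          ≤ ((c * s * ((ns i - 1) * (c * s - 1)) : ℕ) : ℤ) := Nat.cast_le.mpr (hupper i)
      have e1 : ((∑ v : Fin c × Fin s, (d i v * d i v - d i v) : ℕ) : ℤ)
          = ∑ v : Fin c × Fin s, ((d i v : ℤ) ^ 2 - d i v) := by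
        rw [Nat.cast_sum]
        exact Finset.sum_congr rfl fun v _ => hcast _
      have e2 : ((c * s * ((ns i - 1) * (c * s - 1)) : ℕ) : ℤ)
          = N * (((ns i : ℤ) - 1) * (N - 1)) := by
        push_cast [Nat.cast_sub (hpos i), Nat.cast_sub hcs1, hN]
        ring
      rw [e1, e2] at h3
      exact h3
    calc ∑ i : Fin k, ∑ v : Fin c × Fin s, ((d i v : ℤ) ^ 2 - d i v)
        ≤ ∑ i : Fin k, N * (((ns i : ℤ) - 1) * (N - 1)) := Finset.sum_le_sum fun i _ => h1 i
      _ = N * ((Sz - k) * (N - 1)) := by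
        rw [← Finset.mul_sum, ← Finset.sum_mul]
        rw [Finset.sum_sub_distrib, Finset.sum_const, Finset.card_univ, Fintype.card_fin]
        simp [hSz]
  -- integer lower bound via Cauchy-Schwarz
  have hsumd : ∀ v : Fin c × Fin s, ∑ i, (d i v : ℤ) = D := by
    intro v
    have e : ((∑ i, d i v : ℕ) : ℤ) = ∑ i, (d i v : ℤ) := by push_cast; rfl
    rw [← e, hdeg v, hD]
    push_cast [Nat.cast_sub hc1]
    ring
  have hlowerZ : N * (D ^ 2 - k * D)
      ≤ k * ∑ i : Fin k, ∑ v : Fin c × Fin s, ((d i v : ℤ) ^ 2 - d i v) := by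
    have hv : ∀ v : Fin c × Fin s, D ^ 2 - (k : ℤ) * D
        ≤ k * ∑ i, ((d i v : ℤ) ^ 2 - d i v) := by
      intro v
      have hcs := sq_sum_le_card_mul_sum_sq (s := (univ : Finset (Fin k)))
        (f := fun i => (d i v : ℤ))
      rw [hsumd v, Finset.card_univ, Fintype.card_fin] at hcs
      have e : ∑ i, ((d i v : ℤ) ^ 2 - d i v) = (∑ i, (d i v : ℤ) ^ 2) - D := by
        rw [Finset.sum_sub_distrib, hsumd v]
      rw [e, mul_sub]
      linarith
    have hcardV : ((Fintype.card (Fin c × Fin s) : ℕ) : ℤ) = N := by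
      rw [hN]; push_cast [Fintype.card_prod, Fintype.card_fin]; ring
    calc N * (D ^ 2 - (k : ℤ) * D)
        = ∑ _v : Fin c × Fin s, (D ^ 2 - (k : ℤ) * D) := by
          rw [Finset.sum_const, Finset.card_univ, nsmul_eq_mul, hcardV]
      _ ≤ ∑ v : Fin c × Fin s, (k : ℤ) * ∑ i, ((d i v : ℤ) ^ 2 - d i v) :=
          Finset.sum_le_sum fun v _ => hv v
      _ = k * ∑ i : Fin k, ∑ v : Fin c × Fin s, ((d i v : ℤ) ^ 2 - d i v) := by
          rw [← Finset.mul_sum, Finset.sum_comm]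
  -- final arithmetic contradiction
  have hSz' : (k : ℤ) + 1 ≤ Sz := by
    have : ((k + 1 : ℕ) : ℤ) ≤ ((∑ i, ns i : ℕ) : ℤ) := Nat.cast_le.mpr hS
    push_cast at this
    rw [hSz]; exact this
  have hcZ : (2 : ℤ) ≤ c := by exact_mod_cast hc
  have hkZ : (2 : ℤ) ≤ k := by exact_mod_cast hk
  have hsZ : (1 : ℤ) ≤ s := by exact_mod_cast hs1
  have hkey : (k : ℤ) * (N * ((Sz - k) * (N - 1))) < N * (D ^ 2 - k * D) := by
    rw [hN, hD]
    have h1 : (s : ℤ) * ((c : ℤ) * k * (Sz - k) + ((c : ℤ) - 1) * k)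
        ≤ (s : ℤ) * (((c : ℤ) - 1) ^ 2 * s) :=
      mul_le_mul_of_nonneg_left hs (by linarith)
    have h2 : (0 : ℤ) ≤ (c : ℤ) * s := by positivity
    nlinarith [mul_le_mul_of_nonneg_left h1 h2,
      mul_pos (mul_pos (by linarith : (0 : ℤ) < (k : ℤ))
        (by linarith : (0 : ℤ) < Sz - k)) (by nlinarith : (0 : ℤ) < (c : ℤ) * s)]
  have hmul : (k : ℤ) * (∑ i : Fin k, ∑ v : Fin c × Fin s, ((d i v : ℤ) ^ 2 - d i v))
      ≤ (k : ℤ) * (N * ((Sz - k) * (N - 1))) :=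
    mul_le_mul_of_nonneg_left hupperZ (by positivity)
  linarith

end StatementFifteenAux


/-- **Theorem.** Let `c, k, n₁, …, n_k` be positive integers with `c, k, n₁ ≥ 2` and let
`S = n₁ + ⋯ + n_k`. If `(c-1) * ⌈(ck(S-k) + (c-1)k)/(c-1)²⌉` is divisible by `k`, then
`m_c(K_{2,n₁}, …, K_{2,n_k}) ≤ ⌈(ck(S-k) + (c-1)k)/(c-1)²⌉`. -/
theorem statement15 (c k : ℕ) (hc : 2 ≤ c) (hk : 2 ≤ k)
    (ns : Fin k → ℕ) (hpos : ∀ i, 1 ≤ ns i) (hn1 : 2 ≤ ns ⟨0, by omega⟩)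
    (hdvd : (k : ℤ) ∣ ((c : ℤ) - 1) *
      ⌈((c : ℚ) * k * ((∑ i, (ns i : ℚ)) - k) + ((c : ℚ) - 1) * k) / ((c : ℚ) - 1) ^ 2⌉) :
    (sizeRamseyVec c k ns : ℤ) ≤
      ⌈((c : ℚ) * k * ((∑ i, (ns i : ℚ)) - k) + ((c : ℚ) - 1) * k) / ((c : ℚ) - 1) ^ 2⌉ := by
  classical
  set q : ℚ := ((c : ℚ) * k * ((∑ i, (ns i : ℚ)) - k) + ((c : ℚ) - 1) * k) / ((c : ℚ) - 1) ^ 2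
    with hq
  -- the sum of the ns is at least k + 1
  have hSnat : k + 1 ≤ ∑ i, ns i := by
    have h0 := Finset.add_sum_erase (univ : Finset (Fin k)) ns
      (Finset.mem_univ (⟨0, by omega⟩ : Fin k))
    have h1 : ∑ _i ∈ (univ : Finset (Fin k)).erase ⟨0, by omega⟩, 1
        ≤ ∑ i ∈ (univ : Finset (Fin k)).erase ⟨0, by omega⟩, ns i :=
      Finset.sum_le_sum fun i _ => hpos i
    rw [Finset.sum_const, Finset.card_erase_of_mem (Finset.mem_univ _), Finset.card_univ,
      Fintype.card_fin, smul_eq_mul, mul_one] at h1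
    omega
  have hcQ : (2 : ℚ) ≤ (c : ℚ) := by exact_mod_cast hc
  have hkQ : (2 : ℚ) ≤ (k : ℚ) := by exact_mod_cast hk
  have hSQ : (k : ℚ) + 1 ≤ ∑ i, (ns i : ℚ) := by
    have : ((k + 1 : ℕ) : ℚ) ≤ ((∑ i, ns i : ℕ) : ℚ) := Nat.cast_le.mpr hSnat
    push_cast at this
    exact this
  have hden : (0 : ℚ) < ((c : ℚ) - 1) ^ 2 := by nlinarith
  have hnum : (0 : ℚ) < (c : ℚ) * k * ((∑ i, (ns i : ℚ)) - k) + ((c : ℚ) - 1) * k := by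
    have h1 : (0 : ℚ) < (c : ℚ) * k := by nlinarith
    have h2 : (0 : ℚ) < (∑ i, (ns i : ℚ)) - k := by linarith
    nlinarith [mul_pos h1 h2]
  have hqpos : (0 : ℚ) < q := by rw [hq]; exact div_pos hnum hden
  have hceil1 : 1 ≤ ⌈q⌉ := by
    have : (0 : ℤ) < ⌈q⌉ := Int.lt_ceil.mpr (by exact_mod_cast hqpos)
    omega
  set s₀ : ℕ := ⌈q⌉.toNat with hs₀
  have hs₀cast : (s₀ : ℤ) = ⌈q⌉ := Int.toNat_of_nonneg (by omega)
  have hs₀pos : 1 ≤ s₀ := by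
    have : (1 : ℤ) ≤ (s₀ : ℤ) := by rw [hs₀cast]; exact hceil1
    exact_mod_cast this
  -- the key inequality for s₀
  have hq_le : q ≤ ((⌈q⌉ : ℤ) : ℚ) := Int.le_ceil q
  have hnum_le : (c : ℚ) * k * ((∑ i, (ns i : ℚ)) - k) + ((c : ℚ) - 1) * k
      ≤ ((c : ℚ) - 1) ^ 2 * ((⌈q⌉ : ℤ) : ℚ) := by
    rw [hq, div_le_iff₀ hden] at hq_le
    linarith
  have hZ : (c : ℤ) * k * ((∑ i, (ns i : ℤ)) - k) + ((c : ℤ) - 1) * k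
      ≤ ((c : ℤ) - 1) ^ 2 * (s₀ : ℤ) := by
    rw [hs₀cast]
    exact_mod_cast hnum_le
  have hmem : s₀ ∈ {s : ℕ | 0 < s ∧ ArrowsVec c s k ns} :=
    ⟨hs₀pos, st15_arrows c s₀ k hc hk hs₀pos ns hpos hSnat hZ⟩
  have hle : sizeRamseyVec c k ns ≤ s₀ := Nat.sInf_le hmem
  calc (sizeRamseyVec c k ns : ℤ) ≤ (s₀ : ℤ) := by exact_mod_cast hle
    _ = ⌈q⌉ := hs₀cast
end

section
/- Let n ≥ 2 and suppose that there exist a strongly regular graph with parameters (4n−3, 2n−2, n−2, n−1) and a symmetric [α]-Hadamard matrix of order ζ ≥ 2 (with 0 ≤ α ≤ ζ). If ζ is even or ⌈(4(n−1)α+1)/ζ⌉ − 1 is even, then 4n−2 ≤ M_ζ(K_{2, (ζ+α)(n−1)+1}; 2) ≤ 4n−2 + ⌈(4(n−1)α+1)/ζ⌉. -/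
open Finset Matrix

section AuxProofs

instance multiKdec (c s : ℕ) : DecidableRel (multiK c s).Adj :=
  fun v w => inferInstanceAs (Decidable (v.1 ≠ w.1))


lemma card_filter_prod {c s : ℕ} (P : Fin c × Fin s → Prop) [DecidablePred P] :
    (univ.filter P).card = ∑ x : Fin c, (univ.filter fun y => P (x, y)).card := by
  rw [Finset.card_filter, Fintype.sum_prod_type]
  exact Finset.sum_congr rfl fun x _ => (Finset.card_filter _ _).symm

lemma double_count {V : Type*} [Fintype V] [DecidableEq V] (N : V → Finset V)
    (hsym : ∀ a v, v ∈ N a ↔ a ∈ N v) :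
    ∑ a : V, ∑ b : V, (N a ∩ N b).card = ∑ v : V, (N v).card ^ 2 := by
  have key : ∀ a b : V, (N a ∩ N b).card
      = ∑ v : V, (if v ∈ N a then 1 else 0) * (if v ∈ N b then 1 else 0) := by
    intro a b
    have : N a ∩ N b = univ.filter (fun v => v ∈ N a ∧ v ∈ N b) := by ext v; simp
    rw [this, Finset.card_filter]
    exact Finset.sum_congr rfl fun v _ => by
      by_cases h1 : v ∈ N a <;> by_cases h2 : v ∈ N b <;> simp [h1, h2]
  simp only [key]
  rw [Finset.sum_comm]
  have : ∀ b : V, ∑ a : V, ∑ v : V, (if v ∈ N a then 1 else 0) * (if v ∈ N b then 1 else 0)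
      = ∑ v : V, (∑ a : V, if v ∈ N a then 1 else 0) * (if v ∈ N b then 1 else 0) := by
    intro b; rw [Finset.sum_comm]
    exact Finset.sum_congr rfl fun v _ => (Finset.sum_mul _ _ _).symm
  simp only [this]
  rw [Finset.sum_comm]
  refine Finset.sum_congr rfl fun v _ => ?_
  have h1 : ∀ a : V, (if v ∈ N a then (1:ℕ) else 0) = if a ∈ N v then 1 else 0 := fun a => by
    simp [hsym a v]
  have h2 : (∑ a : V, if v ∈ N a then (1:ℕ) else 0) = (N v).card := by
    simp only [h1]
    rw [← Finset.card_filter]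
    congr 1
    simp [Finset.filter_mem_eq_inter]
  simp only [h2]
  rw [← Finset.mul_sum, sq, h2]

section Mm
variable {ζ α : ℕ} (H : Matrix (Fin ζ) (Fin ζ) ℤ) (p r : Fin ζ)

def Mm (e1 e2 : ℤ) : ℕ := (univ.filter fun k => H p k = e1 ∧ H r k = e2).card

lemma neg_one_of_ne_one (hpm : PMOne H) {i j : Fin ζ} (h : ¬ H i j = 1) : H i j = -1 := by
  rcases hpm i j with h1 | h1
  · exact absurd h1 h
  · exact h1

lemma split_by_row (hpm : PMOne H) (P : Fin ζ → Prop) [DecidablePred P] :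
    (univ.filter P).card = (univ.filter fun k => P k ∧ H r k = 1).card
      + (univ.filter fun k => P k ∧ H r k = -1).card := by
  have h := Finset.card_filter_add_card_filter_not
    (s := (univ.filter P)) (fun k => H r k = 1)
  rw [Finset.filter_filter, Finset.filter_filter] at h
  rw [← h]
  congr 2
  ext k
  simp only [Finset.mem_filter, Finset.mem_univ, true_and, and_congr_right_iff]
  intro _
  constructor
  · exact fun h2 => neg_one_of_ne_one H hpm h2
  · intro h2; rw [h2]; norm_num

lemma Mm_sum (hpm : PMOne H) :
    Mm H p r 1 1 + Mm H p r 1 (-1) + Mm H p r (-1) 1 + Mm H p r (-1) (-1) = ζ := by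
  unfold Mm
  have h1 := split_by_row H r hpm (fun k => H p k = 1)
  have h2 := split_by_row H r hpm (fun k => H p k = -1)
  have h3 := Finset.card_filter_add_card_filter_not
    (s := (univ : Finset (Fin ζ))) (fun k => H p k = 1)
  have h4 : (univ.filter fun k : Fin ζ => ¬ H p k = 1)
      = (univ.filter fun k : Fin ζ => H p k = -1) := by
    ext k
    simp only [Finset.mem_filter, Finset.mem_univ, true_and]
    constructor
    · exact fun h5 => neg_one_of_ne_one H hpm h5
    · intro h5; rw [h5]; norm_num
  rw [h4] at h3
  rw [Finset.card_univ, Fintype.card_fin] at h3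
  omega

lemma Mm_ip (hpm : PMOne H) :
    ((H * Hᵀ) p r : ℤ) = (Mm H p r 1 1 : ℤ) - Mm H p r 1 (-1) - Mm H p r (-1) 1
      + Mm H p r (-1) (-1) := by
  rw [Matrix.mul_apply]
  simp only [Matrix.transpose_apply]
  have key : ∀ k : Fin ζ, H p k * H r k
      = ((if H p k = 1 ∧ H r k = 1 then (1:ℤ) else 0) - (if H p k = 1 ∧ H r k = -1 then 1 else 0)
        - (if H p k = -1 ∧ H r k = 1 then 1 else 0)
        + (if H p k = -1 ∧ H r k = -1 then 1 else 0)) := by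
    intro k
    rcases hpm p k with h1 | h1 <;> rcases hpm r k with h2 | h2 <;> simp [h1, h2] <;> norm_num
  rw [Finset.sum_congr rfl fun k _ => key k]
  rw [Finset.sum_add_distrib, Finset.sum_sub_distrib, Finset.sum_sub_distrib]
  unfold Mm
  rw [Finset.card_filter, Finset.card_filter, Finset.card_filter, Finset.card_filter]
  push_cast
  ring

lemma Mm_diag_le (hH : IsBHadamard α H) (hpr : p ≠ r) :
    2 * (Mm H p r 1 1 + Mm H p r (-1) (-1)) ≤ ζ + α := by
  have h1 := Mm_sum H p r hH.1
  have h2 := Mm_ip H p r hH.1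
  have h3 := hH.2 p r hpr
  have h4 : (H * Hᵀ) p r ≤ (α : ℤ) := le_trans (le_abs_self _) h3
  zify at h1 ⊢
  omega

end Mm

section SRGAux
variable {V : Type*} [Fintype V] [DecidableEq V] {G : SimpleGraph V} [DecidableRel G.Adj] {n : ℕ}

lemma common_card (x y : V) :
    Fintype.card (G.commonNeighbors x y)
      = (univ.filter fun w => G.Adj x w ∧ G.Adj y w).card := by
  rw [← Fintype.card_subtype]
  apply Fintype.card_congr
  apply Equiv.subtypeEquivRight
  intro w
  simp [SimpleGraph.mem_commonNeighbors]

lemma deg_card (hG : G.IsSRGWith (4*n-3) (2*n-2) (n-2) (n-1)) (x : V) :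
    (univ.filter fun w => G.Adj x w).card = 2*n-2 := by
  have := hG.regular x
  rwa [SimpleGraph.degree, SimpleGraph.neighborFinset_eq_filter] at this

/-- split of the neighborhood of `x` by adjacency to `y` -/
lemma nb_split (x y : V) :
    (univ.filter fun w => G.Adj x w).card
      = (univ.filter fun w => G.Adj x w ∧ G.Adj y w).card
      + (univ.filter fun w => ¬(w = x ∨ w = y) ∧ G.Adj x w ∧ ¬ G.Adj y w).card
      + (univ.filter fun w => G.Adj x w ∧ w = y).card := by
  have h1 := Finset.card_filter_add_card_filter_not
    (s := univ.filter fun w => G.Adj x w) (fun w => w = y)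
  rw [Finset.filter_filter, Finset.filter_filter] at h1
  have h2 := Finset.card_filter_add_card_filter_not
    (s := univ.filter fun w => G.Adj x w ∧ ¬ w = y) (fun w => G.Adj y w)
  rw [Finset.filter_filter, Finset.filter_filter] at h2
  have e1 : (univ.filter fun w => (G.Adj x w ∧ ¬w = y) ∧ G.Adj y w)
      = (univ.filter fun w => G.Adj x w ∧ G.Adj y w) := by
    ext w
    simp only [Finset.mem_filter, Finset.mem_univ, true_and]
    constructor
    · tauto
    · intro h
      exact ⟨⟨h.1, fun he => G.irrefl (he ▸ h.2)⟩, h.2⟩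
  have e2 : (univ.filter fun w => (G.Adj x w ∧ ¬w = y) ∧ ¬G.Adj y w)
      = (univ.filter fun w => ¬(w = x ∨ w = y) ∧ G.Adj x w ∧ ¬ G.Adj y w) := by
    ext w
    simp only [Finset.mem_filter, Finset.mem_univ, true_and]
    constructor
    · intro h
      refine ⟨?_, h.1.1, h.2⟩
      rintro (he | he)
      · exact G.irrefl (he ▸ h.1.1)
      · exact h.1.2 he
    · tauto
  have e3 : (univ.filter fun w => (G.Adj x w ∧ w = y))
      = (univ.filter fun w => G.Adj x w ∧ w = y) := rfl
  rw [e1, e2] at h2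
  omega

lemma adj_ind (x y : V) :
    (univ.filter fun w => G.Adj x w ∧ w = y).card = if G.Adj x y then 1 else 0 := by
  by_cases h : G.Adj x y
  · rw [if_pos h]
    have : (univ.filter fun w => G.Adj x w ∧ w = y) = {y} := by
      ext w
      simp only [Finset.mem_filter, Finset.mem_univ, true_and, Finset.mem_singleton]
      constructor
      · exact fun hh => hh.2
      · rintro rfl; exact ⟨h, rfl⟩
    rw [this, Finset.card_singleton]
  · rw [if_neg h]
    rw [Finset.card_eq_zero]
    ext w
    simp only [Finset.mem_filter, Finset.mem_univ, true_and, Finset.notMem_empty, iff_false]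
    rintro ⟨hh, rfl⟩
    exact h hh

lemma srg_class_bounds (hn : 2 ≤ n)
    (hG : G.IsSRGWith (4*n-3) (2*n-2) (n-2) (n-1)) (x y : V) (hxy : x ≠ y) :
    (univ.filter fun w => G.Adj x w ∧ G.Adj y w).card ≤ n-1 ∧
    (univ.filter fun w => ¬(w = x ∨ w = y) ∧ G.Adj x w ∧ ¬G.Adj y w).card ≤ n-1 ∧
    (univ.filter fun w => ¬(w = x ∨ w = y) ∧ ¬G.Adj x w ∧ G.Adj y w).card ≤ n-1 ∧
    (univ.filter fun w => ¬(w = x ∨ w = y) ∧ ¬G.Adj x w ∧ ¬G.Adj y w).card ≤ n-1 := by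
  -- common neighbors count
  have hcommon : (univ.filter fun w => G.Adj x w ∧ G.Adj y w).card
      = if G.Adj x y then n-2 else n-1 := by
    rw [← common_card x y]
    by_cases h : G.Adj x y
    · rw [if_pos h, hG.of_adj x y h]
    · have h9 : Fintype.card (G.commonNeighbors x y) = n-1 := hG.of_not_adj hxy h
      rw [if_neg h, h9]
  -- degree splits
  have hx := nb_split (G := G) x y
  have hy := nb_split (G := G) y x
  rw [deg_card hG x] at hx
  rw [deg_card hG y] at hy
  rw [adj_ind x y] at hx
  rw [adj_ind y x] at hy
  have hyx : (univ.filter fun w => G.Adj y w ∧ G.Adj x w).card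
      = (univ.filter fun w => G.Adj x w ∧ G.Adj y w).card := by
    congr 1; ext w; simp only [Finset.mem_filter]; tauto
  have hyx2 : (univ.filter fun w => ¬(w = y ∨ w = x) ∧ G.Adj y w ∧ ¬G.Adj x w).card
      = (univ.filter fun w => ¬(w = x ∨ w = y) ∧ ¬G.Adj x w ∧ G.Adj y w).card := by
    congr 1; ext w; simp only [Finset.mem_filter]; tauto
  rw [hyx, hyx2] at hy
  -- universe split
  have hu1 := Finset.card_filter_add_card_filter_not
    (s := (univ : Finset V)) (fun w => w = x ∨ w = y)
  have hu2 := Finset.card_filter_add_card_filter_not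
    (s := univ.filter fun w => ¬(w = x ∨ w = y)) (fun w => G.Adj x w)
  rw [Finset.filter_filter, Finset.filter_filter] at hu2
  have hu3 := Finset.card_filter_add_card_filter_not
    (s := univ.filter fun w => ¬(w = x ∨ w = y) ∧ G.Adj x w) (fun w => G.Adj y w)
  rw [Finset.filter_filter, Finset.filter_filter] at hu3
  have hu4 := Finset.card_filter_add_card_filter_not
    (s := univ.filter fun w => ¬(w = x ∨ w = y) ∧ ¬G.Adj x w) (fun w => G.Adj y w)
  rw [Finset.filter_filter, Finset.filter_filter] at hu4
  have hpair : (univ.filter fun w : V => w = x ∨ w = y).card = 2 := by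
    have : (univ.filter fun w : V => w = x ∨ w = y) = {x, y} := by
      ext w; simp [Finset.mem_insert]
    rw [this, Finset.card_insert_of_notMem (by simpa using hxy), Finset.card_singleton]
  have hcardV : (univ : Finset V).card = 4*n-3 := by
    rw [Finset.card_univ, hG.card]
  -- identify the pieces
  have e4 : (univ.filter fun w => (¬(w = x ∨ w = y) ∧ G.Adj x w) ∧ G.Adj y w).card
      = (univ.filter fun w => G.Adj x w ∧ G.Adj y w).card := by
    congr 1; ext w
    simp only [Finset.mem_filter, Finset.mem_univ, true_and]
    constructor
    · tauto
    · intro h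
      refine ⟨⟨?_, h.1⟩, h.2⟩
      rintro (rfl | rfl)
      · exact G.irrefl h.1
      · exact G.irrefl h.2
  have e5 : (univ.filter fun w => (¬(w = x ∨ w = y) ∧ G.Adj x w) ∧ ¬G.Adj y w).card
      = (univ.filter fun w => ¬(w = x ∨ w = y) ∧ G.Adj x w ∧ ¬G.Adj y w).card := by
    congr 1; ext w; simp only [Finset.mem_filter]; tauto
  have e6 : (univ.filter fun w => (¬(w = x ∨ w = y) ∧ ¬G.Adj x w) ∧ G.Adj y w).card
      = (univ.filter fun w => ¬(w = x ∨ w = y) ∧ ¬G.Adj x w ∧ G.Adj y w).card := by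
    congr 1; ext w; simp only [Finset.mem_filter]; tauto
  have e7 : (univ.filter fun w => (¬(w = x ∨ w = y) ∧ ¬G.Adj x w) ∧ ¬G.Adj y w).card
      = (univ.filter fun w => ¬(w = x ∨ w = y) ∧ ¬G.Adj x w ∧ ¬G.Adj y w).card := by
    congr 1; ext w; simp only [Finset.mem_filter]; tauto
  rw [e4, e5] at hu3
  rw [e6, e7] at hu4
  rw [hpair, hcardV] at hu1
  by_cases h : G.Adj x y
  · rw [if_pos h] at hx hcommon
    rw [if_pos (G.adj_symm h)] at hy
    omega
  · rw [if_neg h] at hx hcommon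
    rw [if_neg (fun hh => h (G.adj_symm hh))] at hy
    omega

end SRGAux

lemma deg_multiK {c s : ℕ} (v : Fin c × Fin s) :
    (univ.filter fun w => (multiK c s).Adj v w).card = (c - 1) * s := by
  rw [card_filter_prod (fun w => (multiK c s).Adj v w)]
  have h1 : ∀ x : Fin c, (univ.filter fun y : Fin s => (multiK c s).Adj v (x, y)).card
      = if v.1 = x then 0 else s := by
    intro x
    by_cases h : v.1 = x
    · simp [multiK, h]
    · simp [multiK, h, Ne.symm h]
  simp only [h1]
  rw [Finset.sum_ite, Finset.sum_const, Finset.sum_const, smul_eq_mul, mul_zero, zero_add,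
    smul_eq_mul]
  congr 1
  have : (univ.filter fun x : Fin c => ¬ v.1 = x) = univ.erase v.1 := by
    ext x; simp [eq_comm]
  rw [this, Finset.card_erase_of_mem (Finset.mem_univ _), Finset.card_univ, Fintype.card_fin]

lemma arrows_of_count_s16 (c s N' : ℕ) (hc : 0 < c) (hs : 0 < s)
    (hkey : 4 * N' * (c * s - 1) + 2 * ((c-1) * s) + 1 ≤ ((c-1) * s)^2) :
    Arrows c s (N' + 1) 2 := by
  intro C hC
  by_contra hno
  push_neg at hno
  have hcard : Fintype.card (Fin c × Fin s) = c * s := by simp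
  set Nb : Fin 2 → (Fin c × Fin s) → Finset (Fin c × Fin s) :=
    fun i v => univ.filter (fun w => (multiK c s).Adj v w ∧ C v w = i) with hNb
  have hsym : ∀ i a v, v ∈ Nb i a ↔ a ∈ Nb i v := by
    intro i a v
    simp only [hNb, Finset.mem_filter, Finset.mem_univ, true_and]
    rw [hC a v, (multiK c s).adj_comm]
  have hsmall : ∀ i : Fin 2, ∀ a b : Fin c × Fin s, a ≠ b → (Nb i a ∩ Nb i b).card ≤ N' := by
    intro i a b hab
    by_contra hbig
    push_neg at hbig
    obtain ⟨S, hS, hScard⟩ := Finset.exists_subset_card_eq hbig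
    refine hno i ⟨a, b, S, hab, ?_, ?_, hScard, ?_⟩
    · intro ha
      have := hS ha
      simp only [hNb, Finset.mem_inter, Finset.mem_filter] at this
      exact (multiK c s).loopless.irrefl a this.1.2.1
    · intro hb
      have := hS hb
      simp only [hNb, Finset.mem_inter, Finset.mem_filter] at this
      exact (multiK c s).loopless.irrefl b this.2.2.1
    · intro v hv
      have := hS hv
      simp only [hNb, Finset.mem_inter, Finset.mem_filter] at this
      exact ⟨this.1.2.1, this.2.2.1, this.1.2.2, this.2.2.2⟩
  have hfin2 : ∀ i : Fin 2, i = 0 ∨ i = 1 := by decide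
  have hdeg : ∀ v : Fin c × Fin s, (Nb 0 v).card + (Nb 1 v).card = (c-1) * s := by
    intro v
    rw [← deg_multiK v, ← Finset.card_union_of_disjoint]
    · congr 1
      simp only [hNb]
      rw [← Finset.filter_or]
      apply Finset.filter_congr
      intro w _
      constructor
      · rintro (⟨h, _⟩ | ⟨h, _⟩) <;> exact h
      · intro h
        rcases hfin2 (C v w) with h0 | h0
        · exact Or.inl ⟨h, h0⟩
        · exact Or.inr ⟨h, h0⟩
    · simp only [hNb]
      rw [Finset.disjoint_left]
      intro w hw0 hw1
      simp only [Finset.mem_filter] at hw0 hw1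
      rw [hw0.2.2] at hw1
      exact absurd hw1.2.2 (by decide)
  -- the double count bound for each color
  have hDC : ∀ i : Fin 2, ∑ v : Fin c × Fin s, (Nb i v).card ^ 2
      ≤ (∑ v : Fin c × Fin s, (Nb i v).card) + (c * s) * ((c * s - 1) * N') := by
    intro i
    rw [← double_count (Nb i) (hsym i)]
    have hrow : ∀ a : Fin c × Fin s, ∑ b : Fin c × Fin s, (Nb i a ∩ Nb i b).card
        ≤ (Nb i a).card + (c * s - 1) * N' := by
      intro a
      rw [← Finset.sum_erase_add _ _ (Finset.mem_univ a)]
      have h2 : (Nb i a ∩ Nb i a).card = (Nb i a).card := by rw [Finset.inter_self]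
      have h4 : ∑ b ∈ univ.erase a, (Nb i a ∩ Nb i b).card ≤ (c * s - 1) * N' := by
        calc ∑ b ∈ univ.erase a, (Nb i a ∩ Nb i b).card
            ≤ ∑ _b ∈ univ.erase a, N' := by
              apply Finset.sum_le_sum
              intro b hb
              exact hsmall i a b (Ne.symm (Finset.ne_of_mem_erase hb))
          _ = (c * s - 1) * N' := by
              rw [Finset.sum_const, smul_eq_mul,
                Finset.card_erase_of_mem (Finset.mem_univ _), Finset.card_univ, hcard]
      omega
    calc ∑ a : Fin c × Fin s, ∑ b : Fin c × Fin s, (Nb i a ∩ Nb i b).card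
        ≤ ∑ a : Fin c × Fin s, ((Nb i a).card + (c * s - 1) * N') :=
          Finset.sum_le_sum fun a _ => hrow a
      _ = (∑ v : Fin c × Fin s, (Nb i v).card) + (c * s) * ((c * s - 1) * N') := by
          rw [Finset.sum_add_distrib, Finset.sum_const, smul_eq_mul, Finset.card_univ, hcard]
  -- convexity lower bound
  have hconv : (c * s) * ((c-1) * s)^2
      ≤ 2 * (∑ v : Fin c × Fin s, (Nb 0 v).card ^ 2 + ∑ v : Fin c × Fin s, (Nb 1 v).card ^ 2) := by
    have hpt : ∀ v : Fin c × Fin s, ((c-1) * s)^2 ≤ 2 * ((Nb 0 v).card ^2 + (Nb 1 v).card ^2) := by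
      intro v
      have := hdeg v
      nlinarith [sq_nonneg ((Nb 0 v).card - (Nb 1 v).card : ℤ), this]
    calc (c * s) * ((c-1) * s)^2 = ∑ _v : Fin c × Fin s, ((c-1)*s)^2 := by
          rw [Finset.sum_const, smul_eq_mul, Finset.card_univ, hcard]
      _ ≤ ∑ v : Fin c × Fin s, 2 * ((Nb 0 v).card ^2 + (Nb 1 v).card ^2) :=
          Finset.sum_le_sum fun v _ => hpt v
      _ = 2 * (∑ v : Fin c × Fin s, (Nb 0 v).card ^ 2 + ∑ v : Fin c × Fin s, (Nb 1 v).card ^ 2) := by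
          rw [← Finset.mul_sum, Finset.sum_add_distrib]
  -- sum of degrees
  have hsumdeg : (∑ v : Fin c × Fin s, (Nb 0 v).card) + (∑ v : Fin c × Fin s, (Nb 1 v).card)
      = (c * s) * ((c-1) * s) := by
    rw [← Finset.sum_add_distrib]
    calc ∑ v : Fin c × Fin s, ((Nb 0 v).card + (Nb 1 v).card)
        = ∑ _v : Fin c × Fin s, (c-1) * s := Finset.sum_congr rfl fun v _ => hdeg v
      _ = (c * s) * ((c-1) * s) := by
          rw [Finset.sum_const, smul_eq_mul, Finset.card_univ, hcard]
  -- combine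
  have h0 := hDC 0
  have h1 := hDC 1
  have hN : 0 < c * s := Nat.mul_pos hc hs
  have hfin : (c*s) * ((c-1)*s)^2 ≤ (c*s) * (4 * N' * (c*s-1) + 2*((c-1)*s)) := by
    have h5 : (c*s) * ((c-1)*s)^2
        ≤ 2 * ((c * s) * ((c-1) * s) + 2 * ((c * s) * ((c * s - 1) * N'))) := by
      refine le_trans hconv ?_
      omega
    refine le_trans h5 (le_of_eq ?_)
    ring
  have := Nat.le_of_mul_le_mul_left hfin hN
  nlinarith [this, hkey]

lemma key_int (M Z A Q : ℤ) (hM : 1 ≤ M) (hZ : 2 ≤ Z) (hA : 0 ≤ A) (hQ : 0 ≤ Q)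
    (hq : 4*M*A + 1 ≤ Z*Q) :
    4 * ((Z+A)*M) * ((4*M+2+Q)*Z - 1) + 2*((4*M+1+Q)*Z) + 1 ≤ ((4*M+1+Q)*Z)^2 := by
  have h1 : (0:ℤ) ≤ (4*M+2+Q)*Z - 1 := by nlinarith
  have h2 : (Z*Q - (4*M*A + 1)) * ((4*M+2+Q)*Z - 1) ≥ 0 := by
    have := sub_nonneg.mpr hq
    positivity
  nlinarith [h2, hM, hZ, hQ, mul_nonneg hA (by linarith : (0:ℤ) ≤ Z)]

lemma fin2_cases (i : Fin 2) : i = 0 ∨ i = 1 := by omega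

lemma sign_iff (s h : ℤ) (hs : s = 1 ∨ s = -1) (hh : h = 1 ∨ h = -1) (i : Fin 2) :
    ((if s * h = 1 then (0 : Fin 2) else 1) = i) ↔ h = (if i = 0 then (1:ℤ) else -1) * s := by
  rcases fin2_cases i with rfl | rfl <;> rcases hs with rfl | rfl <;> rcases hh with rfl | rfl <;>
    norm_num <;> decide

lemma srg_deg_classes {V : Type*} [Fintype V] [DecidableEq V] {G : SimpleGraph V}
    [DecidableRel G.Adj] {n : ℕ} (hn : 2 ≤ n)
    (hG : G.IsSRGWith (4*n-3) (2*n-2) (n-2) (n-1)) (x : V) :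
    (univ.filter fun w => ¬(w = x ∨ w = x) ∧ G.Adj x w).card = 2*n-2 ∧
    (univ.filter fun w => ¬(w = x ∨ w = x) ∧ ¬G.Adj x w).card = 2*n-2 := by
  have hdeg : (univ.filter fun w => G.Adj x w).card = 2*n-2 := by
    have := hG.regular x
    rwa [SimpleGraph.degree, SimpleGraph.neighborFinset_eq_filter] at this
  have e1 : (univ.filter fun w => ¬(w = x ∨ w = x) ∧ G.Adj x w)
      = (univ.filter fun w => G.Adj x w) := by
    ext w
    simp only [Finset.mem_filter, Finset.mem_univ, true_and, or_self]
    constructor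
    · tauto
    · intro h; exact ⟨fun he => G.irrefl (he ▸ h), h⟩
  have h1 := Finset.card_filter_add_card_filter_not
    (s := (univ : Finset V)) (fun w => w = x ∨ w = x)
  have h2 := Finset.card_filter_add_card_filter_not
    (s := univ.filter fun w => ¬(w = x ∨ w = x)) (fun w => G.Adj x w)
  rw [Finset.filter_filter, Finset.filter_filter] at h2
  have hsing : (univ.filter fun w : V => w = x ∨ w = x).card = 1 := by
    have : (univ.filter fun w : V => w = x ∨ w = x) = {x} := by
      ext w; simp
    rw [this, Finset.card_singleton]
  have hcardV : (univ : Finset V).card = 4*n-3 := by rw [Finset.card_univ, hG.card]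
  have e2 : (univ.filter fun w => ¬(w = x ∨ w = x) ∧ G.Adj x w).card = 2*n-2 := by
    rw [e1]; exact hdeg
  constructor
  · exact e2
  · omega

section Construction

variable {V : Type} [Fintype V] [DecidableEq V] {G : SimpleGraph V} [DecidableRel G.Adj]
  {n ζ α : ℕ}

lemma sum_class_ne (hn : 2 ≤ n) (hG : G.IsSRGWith (4*n-3) (2*n-2) (n-2) (n-1))
    (x y : V) (hxy : x ≠ y) (M : ℤ → ℤ → ℕ)
    (hMsum : M 1 1 + M 1 (-1) + M (-1) 1 + M (-1) (-1) = ζ)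
    (ε : ℤ) (hε : ε = 1 ∨ ε = -1) :
    ∑ w : V, (if w = x ∨ w = y then 0
      else M (ε * (if G.Adj x w then 1 else -1)) (ε * (if G.Adj y w then 1 else -1)))
      ≤ (n-1) * ζ := by
  set F : V → ℕ := fun w => if w = x ∨ w = y then 0
      else M (ε * (if G.Adj x w then 1 else -1)) (ε * (if G.Adj y w then 1 else -1)) with hF
  obtain ⟨hb11, hb10, hb01, hb00⟩ := srg_class_bounds hn hG x y hxy
  -- split the sum
  rw [← Finset.sum_filter_add_sum_filter_not univ (fun w => w = x ∨ w = y) F]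
  have hz : ∑ w ∈ univ.filter (fun w => w = x ∨ w = y), F w = 0 := by
    apply Finset.sum_eq_zero
    intro w hw
    rw [Finset.mem_filter] at hw
    simp only [hF, if_pos hw.2]
  rw [hz, zero_add]
  rw [← Finset.sum_filter_add_sum_filter_not
    (univ.filter fun w => ¬(w = x ∨ w = y)) (fun w => G.Adj x w) F]
  rw [← Finset.sum_filter_add_sum_filter_not
    ((univ.filter fun w => ¬(w = x ∨ w = y)).filter (fun w => G.Adj x w))
    (fun w => G.Adj y w) F]
  rw [← Finset.sum_filter_add_sum_filter_not
    ((univ.filter fun w => ¬(w = x ∨ w = y)).filter (fun w => ¬G.Adj x w))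
    (fun w => G.Adj y w) F]
  simp only [Finset.filter_filter]
  -- bound each class sum
  have c11 : ∑ w ∈ univ.filter (fun w => (¬(w = x ∨ w = y) ∧ G.Adj x w) ∧ G.Adj y w), F w
      ≤ (n-1) * M (ε * 1) (ε * 1) := by
    have hcard : (univ.filter (fun w => (¬(w = x ∨ w = y) ∧ G.Adj x w) ∧ G.Adj y w)).card
        ≤ n-1 := by
      refine le_trans (le_of_eq ?_) hb11
      congr 1; ext w
      simp only [Finset.mem_filter, Finset.mem_univ, true_and]
      constructor
      · tauto
      · intro h
        exact ⟨⟨fun hor => by rcases hor with rfl | rfl; exacts [G.irrefl h.1, G.irrefl h.2],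
          h.1⟩, h.2⟩
    calc ∑ w ∈ univ.filter (fun w => (¬(w = x ∨ w = y) ∧ G.Adj x w) ∧ G.Adj y w), F w
        ≤ ∑ _w ∈ univ.filter (fun w => (¬(w = x ∨ w = y) ∧ G.Adj x w) ∧ G.Adj y w),
            M (ε * 1) (ε * 1) := by
          apply Finset.sum_le_sum
          intro w hw
          rw [Finset.mem_filter] at hw
          simp only [hF, if_neg hw.2.1.1, if_pos hw.2.1.2, if_pos hw.2.2, le_refl]
      _ ≤ (n-1) * M (ε * 1) (ε * 1) := by
          rw [Finset.sum_const, smul_eq_mul]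
          exact Nat.mul_le_mul_right _ hcard
  have c10 : ∑ w ∈ univ.filter (fun w => (¬(w = x ∨ w = y) ∧ G.Adj x w) ∧ ¬G.Adj y w), F w
      ≤ (n-1) * M (ε * 1) (ε * -1) := by
    have hcard : (univ.filter (fun w => (¬(w = x ∨ w = y) ∧ G.Adj x w) ∧ ¬G.Adj y w)).card
        ≤ n-1 := by
      refine le_trans (le_of_eq ?_) hb10
      congr 1; ext w
      simp only [Finset.mem_filter, Finset.mem_univ, true_and]
      tauto
    calc ∑ w ∈ univ.filter (fun w => (¬(w = x ∨ w = y) ∧ G.Adj x w) ∧ ¬G.Adj y w), F w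
        ≤ ∑ _w ∈ univ.filter (fun w => (¬(w = x ∨ w = y) ∧ G.Adj x w) ∧ ¬G.Adj y w),
            M (ε * 1) (ε * -1) := by
          apply Finset.sum_le_sum
          intro w hw
          rw [Finset.mem_filter] at hw
          simp only [hF, if_neg hw.2.1.1, if_pos hw.2.1.2, if_neg hw.2.2, le_refl]
      _ ≤ (n-1) * M (ε * 1) (ε * -1) := by
          rw [Finset.sum_const, smul_eq_mul]
          exact Nat.mul_le_mul_right _ hcard
  have c01 : ∑ w ∈ univ.filter (fun w => (¬(w = x ∨ w = y) ∧ ¬G.Adj x w) ∧ G.Adj y w), F w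
      ≤ (n-1) * M (ε * -1) (ε * 1) := by
    have hcard : (univ.filter (fun w => (¬(w = x ∨ w = y) ∧ ¬G.Adj x w) ∧ G.Adj y w)).card
        ≤ n-1 := by
      refine le_trans (le_of_eq ?_) hb01
      congr 1; ext w
      simp only [Finset.mem_filter, Finset.mem_univ, true_and]
      tauto
    calc ∑ w ∈ univ.filter (fun w => (¬(w = x ∨ w = y) ∧ ¬G.Adj x w) ∧ G.Adj y w), F w
        ≤ ∑ _w ∈ univ.filter (fun w => (¬(w = x ∨ w = y) ∧ ¬G.Adj x w) ∧ G.Adj y w),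
            M (ε * -1) (ε * 1) := by
          apply Finset.sum_le_sum
          intro w hw
          rw [Finset.mem_filter] at hw
          simp only [hF, if_neg hw.2.1.1, if_neg hw.2.1.2, if_pos hw.2.2, le_refl]
      _ ≤ (n-1) * M (ε * -1) (ε * 1) := by
          rw [Finset.sum_const, smul_eq_mul]
          exact Nat.mul_le_mul_right _ hcard
  have c00 : ∑ w ∈ univ.filter (fun w => (¬(w = x ∨ w = y) ∧ ¬G.Adj x w) ∧ ¬G.Adj y w), F w
      ≤ (n-1) * M (ε * -1) (ε * -1) := by
    have hcard : (univ.filter (fun w => (¬(w = x ∨ w = y) ∧ ¬G.Adj x w) ∧ ¬G.Adj y w)).card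
        ≤ n-1 := by
      refine le_trans (le_of_eq ?_) hb00
      congr 1; ext w
      simp only [Finset.mem_filter, Finset.mem_univ, true_and]
      tauto
    calc ∑ w ∈ univ.filter (fun w => (¬(w = x ∨ w = y) ∧ ¬G.Adj x w) ∧ ¬G.Adj y w), F w
        ≤ ∑ _w ∈ univ.filter (fun w => (¬(w = x ∨ w = y) ∧ ¬G.Adj x w) ∧ ¬G.Adj y w),
            M (ε * -1) (ε * -1) := by
          apply Finset.sum_le_sum
          intro w hw
          rw [Finset.mem_filter] at hw
          simp only [hF, if_neg hw.2.1.1, if_neg hw.2.1.2, if_neg hw.2.2, le_refl]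
      _ ≤ (n-1) * M (ε * -1) (ε * -1) := by
          rw [Finset.sum_const, smul_eq_mul]
          exact Nat.mul_le_mul_right _ hcard
  have htot := Nat.add_le_add (Nat.add_le_add (Nat.add_le_add c11 c10) c01) c00
  have hfinal : (n-1) * M (ε * 1) (ε * 1) + (n-1) * M (ε * 1) (ε * -1)
      + (n-1) * M (ε * -1) (ε * 1) + (n-1) * M (ε * -1) (ε * -1) ≤ (n-1) * ζ := by
    rcases hε with rfl | rfl <;>
      [(norm_num; exact Nat.le_of_eq (by rw [← hMsum]; ring));
       (norm_num; exact Nat.le_of_eq (by rw [← hMsum]; ring))]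
  omega

lemma sum_class_eq (hn : 2 ≤ n) (hG : G.IsSRGWith (4*n-3) (2*n-2) (n-2) (n-1))
    (x : V) (M : ℤ → ℤ → ℕ)
    (hMdiag : 2 * (M 1 1 + M (-1) (-1)) ≤ ζ + α)
    (ε : ℤ) (hε : ε = 1 ∨ ε = -1) :
    ∑ w : V, (if w = x ∨ w = x then 0
      else M (ε * (if G.Adj x w then 1 else -1)) (ε * (if G.Adj x w then 1 else -1)))
      ≤ (ζ+α) * (n-1) := by
  set F : V → ℕ := fun w => if w = x ∨ w = x then 0
      else M (ε * (if G.Adj x w then 1 else -1)) (ε * (if G.Adj x w then 1 else -1)) with hF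
  obtain ⟨hd1, hd0⟩ := srg_deg_classes hn hG x
  rw [← Finset.sum_filter_add_sum_filter_not univ (fun w => w = x ∨ w = x) F]
  have hz : ∑ w ∈ univ.filter (fun w => w = x ∨ w = x), F w = 0 := by
    apply Finset.sum_eq_zero
    intro w hw
    rw [Finset.mem_filter] at hw
    simp only [hF, if_pos hw.2]
  rw [hz, zero_add]
  rw [← Finset.sum_filter_add_sum_filter_not
    (univ.filter fun w => ¬(w = x ∨ w = x)) (fun w => G.Adj x w) F]
  simp only [Finset.filter_filter]
  have c1 : ∑ w ∈ univ.filter (fun w => ¬(w = x ∨ w = x) ∧ G.Adj x w), F w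
      ≤ (2*n-2) * M (ε * 1) (ε * 1) := by
    calc ∑ w ∈ univ.filter (fun w => ¬(w = x ∨ w = x) ∧ G.Adj x w), F w
        ≤ ∑ _w ∈ univ.filter (fun w => ¬(w = x ∨ w = x) ∧ G.Adj x w), M (ε * 1) (ε * 1) := by
          apply Finset.sum_le_sum
          intro w hw
          rw [Finset.mem_filter] at hw
          simp only [hF, if_neg hw.2.1, if_pos hw.2.2, le_refl]
      _ = (2*n-2) * M (ε * 1) (ε * 1) := by
          rw [Finset.sum_const, smul_eq_mul, hd1]
  have c0 : ∑ w ∈ univ.filter (fun w => ¬(w = x ∨ w = x) ∧ ¬G.Adj x w), F w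
      ≤ (2*n-2) * M (ε * -1) (ε * -1) := by
    calc ∑ w ∈ univ.filter (fun w => ¬(w = x ∨ w = x) ∧ ¬G.Adj x w), F w
        ≤ ∑ _w ∈ univ.filter (fun w => ¬(w = x ∨ w = x) ∧ ¬G.Adj x w), M (ε * -1) (ε * -1) := by
          apply Finset.sum_le_sum
          intro w hw
          rw [Finset.mem_filter] at hw
          simp only [hF, if_neg hw.2.1, if_neg hw.2.2, le_refl]
      _ = (2*n-2) * M (ε * -1) (ε * -1) := by
          rw [Finset.sum_const, smul_eq_mul, hd0]
  have hfinal : (2*n-2) * M (ε * 1) (ε * 1) + (2*n-2) * M (ε * -1) (ε * -1)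
      ≤ (ζ+α) * (n-1) := by
    have h2 := Nat.mul_le_mul_left (n-1) hMdiag
    have e1 : 2*n-2 = 2*(n-1) := by omega
    rw [e1]
    rcases hε with rfl | rfl <;> norm_num <;> nlinarith [h2]
  omega

lemma sum_comp_le {c : ℕ} (f : Fin c ↪ V) (F : V → ℕ) :
    ∑ w₁ : Fin c, F (f w₁) ≤ ∑ w : V, F w := by
  rw [← Finset.sum_image (fun x _ y _ h => f.injective h)]
  exact Finset.sum_le_sum_of_subset (Finset.subset_univ _)

/-- The coloring built from the SRG `G` and matrix `H`. -/
def bcol {c : ℕ} (f : Fin c → V) (G : SimpleGraph V) [DecidableRel G.Adj]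
    (H : Matrix (Fin ζ) (Fin ζ) ℤ) : (Fin c × Fin ζ) → (Fin c × Fin ζ) → Fin 2 :=
  fun x y => if (if G.Adj (f x.1) (f y.1) then (1:ℤ) else -1) * H x.2 y.2 = 1 then 0 else 1

lemma no_arrows (hn : 2 ≤ n) {c : ℕ} (hc : c ≤ 4*n-3)
    (hG : G.IsSRGWith (4*n-3) (2*n-2) (n-2) (n-1))
    {H : Matrix (Fin ζ) (Fin ζ) ℤ} (hHs : H.IsSymm) (hH : IsBHadamard α H) :
    ¬ Arrows c ζ ((ζ+α)*(n-1)+1) 2 := by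
  obtain ⟨f⟩ : Nonempty (Fin c ↪ V) := by
    apply Function.Embedding.nonempty_of_card_le
    rw [hG.card, Fintype.card_fin]
    exact hc
  intro hA
  have hsym : ∀ v w, bcol (⇑f) G H v w = bcol (⇑f) G H w v := by
    intro v w
    unfold bcol
    have e1 : (if G.Adj (f v.1) (f w.1) then (1:ℤ) else -1)
        = (if G.Adj (f w.1) (f v.1) then (1:ℤ) else -1) := by
      by_cases h : G.Adj (f v.1) (f w.1)
      · rw [if_pos h, if_pos (G.adj_symm h)]
      · rw [if_neg h, if_neg (fun hh => h (G.adj_symm hh))]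
    rw [e1, hHs.apply v.2 w.2]
  obtain ⟨i, a, b, S, hab, haS, hbS, hScard, hprop⟩ := hA (bcol (⇑f) G H) hsym
  -- S is contained in the common-neighbor set
  have hsub : S ⊆ univ.filter fun w => (multiK c ζ).Adj a w ∧ (multiK c ζ).Adj b w ∧
      bcol (⇑f) G H a w = i ∧ bcol (⇑f) G H b w = i := by
    intro v hv
    rw [Finset.mem_filter]
    obtain ⟨h1, h2, h3, h4⟩ := hprop v hv
    exact ⟨Finset.mem_univ v, h1, h2, h3, h4⟩
  have hkey : (univ.filter fun w => (multiK c ζ).Adj a w ∧ (multiK c ζ).Adj b w ∧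
      bcol (⇑f) G H a w = i ∧ bcol (⇑f) G H b w = i).card ≤ (ζ+α)*(n-1) := by
    obtain ⟨u, p⟩ := a
    obtain ⟨v, r⟩ := b
    have hεpm : (if i = 0 then (1:ℤ) else -1) = 1 ∨ (if i = 0 then (1:ℤ) else -1) = -1 := by
      rcases fin2_cases i with rfl | rfl <;> simp
    have hσpm : ∀ s t : V, (if G.Adj s t then (1:ℤ) else -1) = 1
        ∨ (if G.Adj s t then (1:ℤ) else -1) = -1 := by
      intro s t; by_cases h : G.Adj s t <;> simp [h]
    -- rewrite as a sum over the first coordinate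
    rw [card_filter_prod]
    -- each fiber equals Gv (f w₁)
    have hfib : ∀ w₁ : Fin c,
        (univ.filter fun k => (multiK c ζ).Adj (u,p) (w₁,k) ∧ (multiK c ζ).Adj (v,r) (w₁,k) ∧
          bcol (⇑f) G H (u,p) (w₁,k) = i ∧ bcol (⇑f) G H (v,r) (w₁,k) = i).card
        = (if f w₁ = f u ∨ f w₁ = f v then 0
            else Mm H p r ((if i = 0 then (1:ℤ) else -1) * (if G.Adj (f u) (f w₁) then 1 else -1))
              ((if i = 0 then (1:ℤ) else -1) * (if G.Adj (f v) (f w₁) then 1 else -1))) := by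
      intro w₁
      by_cases h1 : w₁ = u
      · subst h1
        rw [if_pos (Or.inl rfl)]
        rw [Finset.card_eq_zero]
        apply Finset.filter_eq_empty_iff.mpr
        intro k _
        rintro ⟨hadj, -⟩
        exact hadj rfl
      · by_cases h2 : w₁ = v
        · subst h2
          rw [if_pos (Or.inr rfl)]
          rw [Finset.card_eq_zero]
          apply Finset.filter_eq_empty_iff.mpr
          intro k _
          rintro ⟨-, hadj, -⟩
          exact hadj rfl
        · have hne1 : ¬ (f w₁ = f u ∨ f w₁ = f v) := by
            rintro (h | h)
            exacts [h1 (f.injective h), h2 (f.injective h)]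
          rw [if_neg hne1]
          unfold Mm
          congr 1
          ext k
          simp only [Finset.mem_filter, Finset.mem_univ, true_and]
          have hadj1 : (multiK c ζ).Adj (u,p) (w₁,k) := fun he => h1 he.symm
          have hadj2 : (multiK c ζ).Adj (v,r) (w₁,k) := fun he => h2 he.symm
          have hb1 : (bcol (⇑f) G H (u,p) (w₁,k) = i)
              ↔ H p k = (if i = 0 then (1:ℤ) else -1) * (if G.Adj (f u) (f w₁) then 1 else -1) :=
            sign_iff _ _ (hσpm (f u) (f w₁)) (hH.1 p k) i
          have hb2 : (bcol (⇑f) G H (v,r) (w₁,k) = i)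
              ↔ H r k = (if i = 0 then (1:ℤ) else -1) * (if G.Adj (f v) (f w₁) then 1 else -1) :=
            sign_iff _ _ (hσpm (f v) (f w₁)) (hH.1 r k) i
          constructor
          · rintro ⟨-, -, hc1, hc2⟩
            exact ⟨hb1.mp hc1, hb2.mp hc2⟩
          · rintro ⟨hc1, hc2⟩
            exact ⟨hadj1, hadj2, hb1.mpr hc1, hb2.mpr hc2⟩
    rw [Finset.sum_congr rfl fun w₁ _ => hfib w₁]
    -- extend the sum to all of V
    have himag : ∑ w₁ : Fin c, (if f w₁ = f u ∨ f w₁ = f v then 0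
        else Mm H p r ((if i = 0 then (1:ℤ) else -1) * (if G.Adj (f u) (f w₁) then 1 else -1))
          ((if i = 0 then (1:ℤ) else -1) * (if G.Adj (f v) (f w₁) then 1 else -1)))
        ≤ ∑ w : V, (if w = f u ∨ w = f v then 0
        else Mm H p r ((if i = 0 then (1:ℤ) else -1) * (if G.Adj (f u) w then 1 else -1))
          ((if i = 0 then (1:ℤ) else -1) * (if G.Adj (f v) w then 1 else -1))) := by
      have := sum_comp_le f (fun w => if w = f u ∨ w = f v then 0
        else Mm H p r ((if i = 0 then (1:ℤ) else -1) * (if G.Adj (f u) w then 1 else -1))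
          ((if i = 0 then (1:ℤ) else -1) * (if G.Adj (f v) w then 1 else -1)))
      exact this
    refine le_trans himag ?_
    -- now bound the sum over V
    by_cases huv : u = v
    · subst huv
      -- here p ≠ r
      have hpr : p ≠ r := fun h => hab (by rw [h])
      exact sum_class_eq hn hG (f u) (Mm H p r) (Mm_diag_le H p r hH hpr) _ hεpm
    · have hxy : f u ≠ f v := fun h => huv (f.injective h)
      refine le_trans (sum_class_ne hn hG (f u) (f v) hxy (Mm H p r)
        (Mm_sum H p r hH.1) _ hεpm) ?_
      calc (n-1) * ζ ≤ (n-1) * (ζ + α) := Nat.mul_le_mul_left _ (Nat.le_add_right _ _)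
        _ = (ζ+α) * (n-1) := Nat.mul_comm _ _
  have hScard' : S.card = (ζ+α)*(n-1)+1 := hScard
  have := Finset.card_le_card hsub
  omega

end Construction

end AuxProofs

/-- **Example (bounds from an SRG with parameters `(4n-3, 2n-2, n-2, n-1)`).**
Let `n ≥ 2`. Suppose there exist a strongly regular graph with parameters
`(4n-3, 2n-2, n-2, n-1)` and a symmetric `[α]`-Hadamard matrix of order `ζ ≥ 2` (with `α ≤ ζ`).
If `ζ` is even or `⌈(4(n-1)α+1)/ζ⌉ - 1` is even, then
`4n-2 ≤ M_ζ(K_{2, (ζ+α)(n-1)+1}; 2) ≤ 4n-2 + ⌈(4(n-1)α+1)/ζ⌉`. -/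
theorem statement16 (n ζ α : ℕ) (hn : 2 ≤ n) (hζ : 2 ≤ ζ) (hα : α ≤ ζ)
    (hSRG : ∃ (V : Type) (_ : Fintype V) (G : SimpleGraph V) (_ : DecidableRel G.Adj),
      G.IsSRGWith (4 * n - 3) (2 * n - 2) (n - 2) (n - 1))
    (hHad : ∃ H : Matrix (Fin ζ) (Fin ζ) ℤ, H.IsSymm ∧ IsBHadamard α H)
    (hpar : Even ζ ∨ Even (⌈(4 * ((n : ℚ) - 1) * α + 1) / (ζ : ℚ)⌉ - 1)) :
    4 * n - 2 ≤ setRamsey ζ ((ζ + α) * (n - 1) + 1) 2 ∧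
    (setRamsey ζ ((ζ + α) * (n - 1) + 1) 2 : ℤ) ≤
      4 * (n : ℤ) - 2 + ⌈(4 * ((n : ℚ) - 1) * α + 1) / (ζ : ℚ)⌉ := by
  obtain ⟨V, hFin, G, hDec, hG⟩ := hSRG
  obtain ⟨H, hHs, hH⟩ := hHad
  letI : DecidableEq V := Classical.decEq V
  set Q : ℤ := ⌈(4 * ((n : ℚ) - 1) * α + 1) / (ζ : ℚ)⌉ with hQ
  have hζ0 : (0:ℚ) < (ζ:ℚ) := by
    have : (0:ℕ) < ζ := by omega
    exact_mod_cast this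
  have hn1 : (1:ℚ) ≤ (n:ℚ) - 1 := by
    have : (2:ℚ) ≤ (n:ℚ) := by exact_mod_cast hn
    linarith
  have hQ1 : 1 ≤ Q := by
    rw [hQ]
    have hpos : (0:ℚ) < (4 * ((n : ℚ) - 1) * α + 1) / (ζ : ℚ) := by
      apply div_pos _ hζ0
      have : (0:ℚ) ≤ (α:ℚ) := by positivity
      nlinarith
    exact Int.ceil_pos.mpr hpos
  set q : ℕ := Q.toNat with hq
  have hqQ : (q : ℤ) = Q := Int.toNat_of_nonneg (by omega)
  have hq1 : 1 ≤ q := by omega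
  -- the ceiling inequality: 4(n-1)α + 1 ≤ ζ q
  have hζq : 4 * (n-1) * α + 1 ≤ ζ * q := by
    have h1 : (4 * ((n : ℚ) - 1) * α + 1) / (ζ : ℚ) ≤ (Q : ℚ) := Int.le_ceil _
    rw [div_le_iff₀ hζ0] at h1
    have h2 : (4 * ((n : ℚ) - 1) * α + 1) ≤ (q : ℚ) * (ζ : ℚ) := by
      have : ((q:ℤ):ℚ) = (Q:ℚ) := by exact_mod_cast hqQ
      rw [← this] at h1
      exact_mod_cast h1
    have h3 : ((n:ℚ) - 1) = ((n - 1 : ℕ) : ℚ) := by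
      have : (1:ℚ) ≤ (n:ℚ) := by linarith
      push_cast [Nat.cast_sub (by omega : 1 ≤ n)]
      ring
    rw [h3] at h2
    have h4 : 4 * (n-1) * α + 1 ≤ q * ζ := by exact_mod_cast h2
    rw [Nat.mul_comm ζ q]
    exact h4
  -- the key counting inequality for c₀ = 4n-2+q
  set c₀ : ℕ := 4*n-2+q with hc₀
  have harr : Arrows c₀ ζ ((ζ+α)*(n-1)+1) 2 := by
    apply arrows_of_count_s16 c₀ ζ ((ζ+α)*(n-1)) (by omega) (by omega)
    have KI := key_int ((n:ℤ)-1) ζ α q (by exact_mod_cast hn1) (by exact_mod_cast hζ)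
      (by positivity) (by positivity) ?_
    · have e1 : (1:ℕ) ≤ c₀ * ζ := by
        have : 1 ≤ c₀ := by omega
        nlinarith
      zify [e1, show 1 ≤ c₀ by omega, show 1 ≤ n by omega]
      have e2 : (c₀ : ℤ) = 4*((n:ℤ)-1)+2+q := by
        rw [hc₀]
        push_cast [Nat.cast_sub (show 2 ≤ 4*n by omega)]
        ring
      rw [e2]
      nlinarith [KI]
    · have := hζq
      zify [Nat.cast_sub (show 1 ≤ n by omega)] at this
      push_cast
      push_cast [Nat.cast_sub (show 1 ≤ n by omega)] at this
      linarith
  have hmem : c₀ ∈ {c : ℕ | 0 < c ∧ Arrows c ζ ((ζ+α)*(n-1)+1) 2} := ⟨by omega, harr⟩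
  constructor
  · -- lower bound
    apply le_csInf ⟨c₀, hmem⟩
    intro b hb
    by_contra hlt
    push_neg at hlt
    have hb' : b ≤ 4*n-3 := by omega
    exact no_arrows hn hb' hG hHs hH hb.2
  · -- upper bound
    have hle : setRamsey ζ ((ζ+α)*(n-1)+1) 2 ≤ c₀ := Nat.sInf_le hmem
    have : ((setRamsey ζ ((ζ+α)*(n-1)+1) 2 : ℕ) : ℤ) ≤ (c₀ : ℤ) := by exact_mod_cast hle
    refine le_trans this ?_
    have e2 : (c₀ : ℤ) = 4*(n:ℤ)-2+q := by
      rw [hc₀]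
      push_cast [Nat.cast_sub (show 2 ≤ 4*n by omega)]
      ring
    rw [e2, hqQ]
end

section
/- Let n ≥ 2 and suppose that there exist a strongly regular graph with parameters (4n−3, 2n−2, n−2, n−1) and a symmetric Hadamard matrix of order ζ, where ζ−α is even, 0 ≤ α ≤ ζ/2, and ζ−α > (√2+1)(2n−1)(4αn−4α+1). Then M_{ζ−α}(K_{2, ζ(n−1)+1}; 2) = 4n−2. -/
open Finset Matrix

section AuxProof

lemma arrows_mono {c₁ c₂ s n k : ℕ} (hc : c₁ ≤ c₂) (h : Arrows c₁ s n k) :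
    Arrows c₂ s n k := by
  intro C hCsym
  set F : Fin c₁ × Fin s → Fin c₂ × Fin s := fun p => (Fin.castLE hc p.1, p.2) with hF
  have hFinj : Function.Injective F := by
    intro p q hpq
    simp only [hF, Prod.ext_iff] at hpq ⊢
    exact ⟨Fin.castLE_injective hc hpq.1, hpq.2⟩
  obtain ⟨i, a, b, S, hab, haS, hbS, hcard, hall⟩ :=
    h (fun p q => C (F p) (F q)) (fun p q => hCsym _ _)
  refine ⟨i, F a, F b, S.image F, fun e => hab (hFinj e), ?_, ?_, ?_, ?_⟩
  · simp only [Finset.mem_image]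
    rintro ⟨v, hv, he⟩; exact haS (hFinj he ▸ hv)
  · simp only [Finset.mem_image]
    rintro ⟨v, hv, he⟩; exact hbS (hFinj he ▸ hv)
  · rw [Finset.card_image_of_injective _ hFinj, hcard]
  · rintro v hv
    simp only [Finset.mem_image] at hv
    obtain ⟨w, hw, rfl⟩ := hv
    obtain ⟨h1, h2, h3, h4⟩ := hall w hw
    refine ⟨?_, ?_, h3, h4⟩
    · exact fun e => h1 (Fin.castLE_injective hc e)
    · exact fun e => h2 (Fin.castLE_injective hc e)

lemma sum_offDiag_mul (α : Type) [Fintype α] [DecidableEq α] (f g : α → ℤ) :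
    ∑ p ∈ (univ : Finset α).offDiag, f p.1 * g p.2
      = (∑ a, f a) * (∑ a, g a) - ∑ a, f a * g a := by
  have h2 : ∑ p ∈ (univ : Finset α).diag, f p.1 * g p.2 = ∑ a, f a * g a := by
    rw [show (univ : Finset α).diag = univ.image (fun a => (a,a)) from ?_]
    · rw [Finset.sum_image (by intro x _ y _ h; exact congrArg Prod.fst h)]
    · ext ⟨a, b⟩; simp [Finset.mem_diag, eq_comm (a := a) (b := b)]
  have h3 := Finset.sum_union (f := fun p : α × α => f p.1 * g p.2)
    (Finset.disjoint_diag_offDiag (univ : Finset α))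
  rw [Finset.diag_union_offDiag] at h3
  rw [Finset.sum_product (f := fun p : α × α => f p.1 * g p.2)] at h3
  simp only [← Finset.sum_mul, ← Finset.mul_sum] at h3
  rw [h2] at h3
  omega

lemma arrows_of_count_s18 (c s N : ℕ) (hc : 0 < c) (hs : 0 < s) (hN : 1 ≤ N)
    (hineq : 4*((c:ℤ)*s - 1)*((N:ℤ)-1) < ((c:ℤ)-1)*s*(((c:ℤ)-1)*s - 2)) :
    Arrows c s N 2 := by
  classical
  intro C hsym
  by_contra hno
  push_neg at hno
  let g : (Fin c × Fin s) → Fin 2 → (Fin c × Fin s) → ℤ :=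
    fun w i a => if (multiK c s).Adj a w ∧ C a w = i then 1 else 0
  let d : (Fin c × Fin s) → Fin 2 → ℤ := fun w i => ∑ a, g w i a
  -- counts of common i-neighbors are bounded by N - 1
  have hcount : ∀ (a b : Fin c × Fin s), a ≠ b → ∀ i,
      ∑ w, g w i a * g w i b ≤ (N:ℤ) - 1 := by
    intro a b hab i
    have hrw : ∑ w, g w i a * g w i b
        = ((univ.filter (fun w => ((multiK c s).Adj a w ∧ C a w = i) ∧
            ((multiK c s).Adj b w ∧ C b w = i))).card : ℤ) := by
      rw [Finset.card_filter]
      push_cast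
      apply Finset.sum_congr rfl
      intro w _
      by_cases h1 : (multiK c s).Adj a w ∧ C a w = i <;>
        by_cases h2 : (multiK c s).Adj b w ∧ C b w = i <;>
        simp [g, h1, h2]
    rw [hrw]
    set T := univ.filter (fun w => ((multiK c s).Adj a w ∧ C a w = i) ∧
      ((multiK c s).Adj b w ∧ C b w = i)) with hT
    have hTcard : T.card < N := by
      by_contra hge
      push_neg at hge
      obtain ⟨S, hST, hScard⟩ := Finset.exists_subset_card_eq hge
      refine hno i ⟨a, b, S, hab, ?_, ?_, hScard, ?_⟩
      · intro haS
        have := (Finset.mem_filter.1 (hST haS)).2.1.1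
        exact (multiK c s).loopless.irrefl a ((multiK c s).symm.symm _ _ this)
      · intro hbS
        have := (Finset.mem_filter.1 (hST hbS)).2.2.1
        exact (multiK c s).loopless.irrefl b ((multiK c s).symm.symm _ _ this)
      · intro v hv
        have h := (Finset.mem_filter.1 (hST hv)).2
        exact ⟨h.1.1, h.2.1, h.1.2, h.2.2⟩
    omega
  -- degrees
  have hnb : ∀ w : Fin c × Fin s,
      (univ.filter (fun a : Fin c × Fin s => (multiK c s).Adj a w)).card = (c-1)*s := by
    intro w
    have he : univ.filter (fun a : Fin c × Fin s => (multiK c s).Adj a w)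
        = (univ.erase w.1) ×ˢ (univ : Finset (Fin s)) := by
      ext a
      rw [Finset.mem_filter]
      simp [multiK, Finset.mem_product, Finset.mem_erase]
    rw [he, Finset.card_product, Finset.card_erase_of_mem (Finset.mem_univ _)]
    simp
  have hM : ∀ w : Fin c × Fin s, d w 0 + d w 1 = ((c:ℤ)-1)*s := by
    intro w
    have h1 : d w 0 + d w 1 = ∑ a, (g w 0 a + g w 1 a) := (Finset.sum_add_distrib).symm
    have h2 : ∀ a : Fin c × Fin s, g w 0 a + g w 1 a
        = if (multiK c s).Adj a w then 1 else 0 := by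
      intro a
      have : C a w = 0 ∨ C a w = 1 := by
        have := (C a w).isLt; omega
      by_cases hA : (multiK c s).Adj a w
      · rcases this with h | h <;> simp [g, hA, h]
      · simp [g, hA]
    rw [h1, Finset.sum_congr rfl (fun a _ => h2 a), Finset.sum_boole, hnb w]
    push_cast [Nat.cast_sub hc]
    ring
  -- per color bound on the double count
  have hkey : ∀ i, ∑ w, ((d w i)^2 - d w i)
      ≤ ((c:ℤ)*s*((c:ℤ)*s - 1)) * ((N:ℤ)-1) := by
    intro i
    have h1 : ∀ w, (d w i)^2 - d w i
        = ∑ p ∈ (univ : Finset (Fin c × Fin s)).offDiag, g w i p.1 * g w i p.2 := by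
      intro w
      rw [sum_offDiag_mul]
      have hsq : ∑ a, g w i a * g w i a = d w i := by
        apply Finset.sum_congr rfl
        intro a _
        by_cases h : (multiK c s).Adj a w ∧ C a w = i <;> simp [g, h]
      rw [hsq, show (∑ a, g w i a) = d w i from rfl]
      ring
    calc ∑ w, ((d w i)^2 - d w i)
        = ∑ w, ∑ p ∈ (univ : Finset (Fin c × Fin s)).offDiag, g w i p.1 * g w i p.2 :=
          Finset.sum_congr rfl (fun w _ => h1 w)
      _ = ∑ p ∈ (univ : Finset (Fin c × Fin s)).offDiag, ∑ w, g w i p.1 * g w i p.2 :=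
          Finset.sum_comm
      _ ≤ ∑ _p ∈ (univ : Finset (Fin c × Fin s)).offDiag, ((N:ℤ) - 1) := by
          apply Finset.sum_le_sum
          intro p hp
          exact hcount p.1 p.2 (Finset.mem_offDiag.1 hp).2.2 i
      _ = ((univ : Finset (Fin c × Fin s)).offDiag.card : ℤ) * ((N:ℤ)-1) := by
          rw [Finset.sum_const, nsmul_eq_mul]
      _ = ((c:ℤ)*s*((c:ℤ)*s - 1)) * ((N:ℤ)-1) := by
          rw [Finset.offDiag_card, Finset.card_univ]
          have hcard : Fintype.card (Fin c × Fin s) = c * s := by simp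
          rw [hcard]
          have hle : c*s ≤ c*s*(c*s) := Nat.le_mul_of_pos_right _ (Nat.mul_pos hc hs)
          push_cast [Nat.cast_sub hle]
          ring
  -- convexity lower bound
  have hconv : ∀ w : Fin c × Fin s,
      ((c:ℤ)-1)*s*(((c:ℤ)-1)*s-2) ≤ 2*(((d w 0)^2 - d w 0) + ((d w 1)^2 - d w 1)) := by
    intro w
    rw [← hM w]
    nlinarith [sq_nonneg (d w 0 - d w 1)]
  have hsum0 := hkey 0
  have hsum1 := hkey 1
  have htot : ((c:ℤ)*s) * (((c:ℤ)-1)*s*(((c:ℤ)-1)*s-2))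
      ≤ 2*((∑ w, ((d w 0)^2 - d w 0)) + (∑ w, ((d w 1)^2 - d w 1))) := by
    have := Finset.sum_le_sum (fun w _ => hconv w)
      (s := (univ : Finset (Fin c × Fin s)))
    rw [Finset.sum_const, Finset.card_univ] at this
    have hcard : Fintype.card (Fin c × Fin s) = c * s := by simp
    rw [hcard, nsmul_eq_mul] at this
    push_cast at this
    calc ((c:ℤ)*s) * (((c:ℤ)-1)*s*(((c:ℤ)-1)*s-2)) ≤ _ := this
      _ = 2*((∑ w, ((d w 0)^2 - d w 0)) + (∑ w, ((d w 1)^2 - d w 1))) := by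
          rw [← Finset.sum_add_distrib, Finset.mul_sum]
  have hcs : (0:ℤ) < (c:ℤ)*s := by positivity
  nlinarith [mul_lt_mul_of_pos_left hineq hcs]

section Lower

variable {m s α ζ : ℕ} {V : Type} [Fintype V] [DecidableEq V]
  (G : SimpleGraph V) [DecidableRel G.Adj]

/-- sum of ±1 adjacency signs over all vertices except `u`. -/
lemma sum_eps_erase (hG : G.IsSRGWith (4*m+5) (2*m+2) m (m+1)) (u : V) :
    ∑ w ∈ univ.erase u, (if G.Adj u w then (1:ℤ) else -1) = 0 := by
  classical
  rw [Finset.sum_ite]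
  have h1 : (univ.erase u).filter (fun w => G.Adj u w) = G.neighborFinset u := by
    ext w
    simp only [Finset.mem_filter, Finset.mem_erase, Finset.mem_univ, true_and,
      SimpleGraph.mem_neighborFinset]
    constructor
    · exact fun h => h.2
    · exact fun h => ⟨⟨(G.ne_of_adj h).symm, trivial⟩, h⟩
  have h2 : ((univ.erase u).filter (fun w => G.Adj u w)).card = 2*m+2 := by
    rw [h1]
    exact hG.regular u
  have h3 : ((univ.erase u).filter (fun w => ¬ G.Adj u w)).card = 2*m+2 := by
    have := Finset.card_filter_add_card_filter_not
      (s := univ.erase u) (p := fun w => G.Adj u w)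
    rw [Finset.card_erase_of_mem (Finset.mem_univ u), Finset.card_univ, hG.card] at this
    omega
  rw [Finset.sum_const, Finset.sum_const, h2, h3]
  push_cast
  ring


lemma sum_eps_erase2 (hG : G.IsSRGWith (4*m+5) (2*m+2) m (m+1)) {u v : V} (huv : u ≠ v) :
    ∑ w ∈ (univ.erase u).erase v, (if G.Adj u w then (1:ℤ) else -1)
      = - (if G.Adj u v then (1:ℤ) else -1) := by
  classical
  have hv : v ∈ univ.erase u := Finset.mem_erase.2 ⟨huv.symm, Finset.mem_univ v⟩
  have := Finset.add_sum_erase _ (fun w => if G.Adj u w then (1:ℤ) else -1) hv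
  have h0 := sum_eps_erase G hG u
  rw [h0] at this
  linarith [this]

lemma sum_epsprod (hG : G.IsSRGWith (4*m+5) (2*m+2) m (m+1)) {u v : V} (huv : u ≠ v) :
    ∑ w ∈ (univ.erase u).erase v,
      (if G.Adj u w then (1:ℤ) else -1) * (if G.Adj v w then (1:ℤ) else -1) = -1 := by
  classical
  set W := (univ.erase u).erase v with hW
  have hvmem : v ∈ univ.erase u := Finset.mem_erase.2 ⟨huv.symm, Finset.mem_univ v⟩
  have hWcard : W.card = 4*m+3 := by
    rw [hW, Finset.card_erase_of_mem hvmem, Finset.card_erase_of_mem (Finset.mem_univ u),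
      Finset.card_univ, hG.card]
    omega
  have hpt : ∀ w, (if G.Adj u w then (1:ℤ) else -1) * (if G.Adj v w then (1:ℤ) else -1)
      = 4 * (if G.Adj u w ∧ G.Adj v w then (1:ℤ) else 0)
        - 2 * (if G.Adj u w then (1:ℤ) else 0) - 2 * (if G.Adj v w then (1:ℤ) else 0) + 1 := by
    intro w
    by_cases h1 : G.Adj u w <;> by_cases h2 : G.Adj v w <;> simp [h1, h2] <;> ring
  rw [Finset.sum_congr rfl (fun w _ => hpt w)]
  have hA : W.filter (fun w => G.Adj u w ∧ G.Adj v w) = (G.commonNeighbors u v).toFinset := by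
    ext w
    simp only [Set.mem_toFinset, SimpleGraph.mem_commonNeighbors, Finset.mem_filter, hW,
      Finset.mem_erase, Finset.mem_univ, true_and, and_true]
    constructor
    · exact fun h => h.2
    · exact fun h => ⟨⟨(G.ne_of_adj h.2).symm, (G.ne_of_adj h.1).symm⟩, h⟩
  have hB : W.filter (fun w => G.Adj u w) = (G.neighborFinset u).erase v := by
    ext w
    simp only [Finset.mem_filter, hW, Finset.mem_erase, Finset.mem_univ, true_and, and_true,
      SimpleGraph.mem_neighborFinset]
    constructor
    · exact fun h => ⟨h.1.1, h.2⟩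
    · exact fun h => ⟨⟨h.1, (G.ne_of_adj h.2).symm⟩, h.2⟩
  have hB' : W.filter (fun w => G.Adj v w) = (G.neighborFinset v).erase u := by
    ext w
    simp only [Finset.mem_filter, hW, Finset.mem_erase, Finset.mem_univ, true_and, and_true,
      SimpleGraph.mem_neighborFinset]
    constructor
    · exact fun h => ⟨h.1.2, h.2⟩
    · exact fun h => ⟨⟨(G.ne_of_adj h.2).symm, h.1⟩, h.2⟩
  have expand : ∑ w ∈ W, (4 * (if G.Adj u w ∧ G.Adj v w then (1:ℤ) else 0)
        - 2 * (if G.Adj u w then (1:ℤ) else 0) - 2 * (if G.Adj v w then (1:ℤ) else 0) + 1)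
      = 4 * ((W.filter (fun w => G.Adj u w ∧ G.Adj v w)).card : ℤ)
        - 2 * ((W.filter (fun w => G.Adj u w)).card : ℤ)
        - 2 * ((W.filter (fun w => G.Adj v w)).card : ℤ) + (W.card : ℤ) := by
    rw [Finset.sum_add_distrib, Finset.sum_sub_distrib, Finset.sum_sub_distrib,
      ← Finset.mul_sum, ← Finset.mul_sum, ← Finset.mul_sum,
      Finset.sum_boole, Finset.sum_boole, Finset.sum_boole, Finset.sum_const]
    simp
  rw [expand, hA, hB, hB', hWcard]
  rw [Set.toFinset_card]
  by_cases hadj : G.Adj u v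
  · rw [hG.of_adj u v hadj]
    rw [Finset.card_erase_of_mem (by rwa [SimpleGraph.mem_neighborFinset])]
    rw [Finset.card_erase_of_mem (by rw [SimpleGraph.mem_neighborFinset]; exact hadj.symm)]
    have hdu : (G.neighborFinset u).card = 2*m+2 := hG.regular u
    have hdv : (G.neighborFinset v).card = 2*m+2 := hG.regular v
    rw [hdu, hdv]
    push_cast
    ring
  · rw [hG.of_not_adj huv hadj]
    rw [Finset.erase_eq_of_notMem (by rwa [SimpleGraph.mem_neighborFinset])]
    rw [Finset.erase_eq_of_notMem
      (by rw [SimpleGraph.mem_neighborFinset]; exact fun h => hadj h.symm)]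
    have hdu : (G.neighborFinset u).card = 2*m+2 := hG.regular u
    have hdv : (G.neighborFinset v).card = 2*m+2 := hG.regular v
    rw [hdu, hdv]
    push_cast
    ring

end Lower

lemma pm_sum_abs {s : ℕ} (f g : Fin s → ℤ) (hf : ∀ z, f z = 1 ∨ f z = -1)
    (hg : ∀ z, g z = 1 ∨ g z = -1) :
    |∑ z, (f z + g z)| ≤ (s:ℤ) + ∑ z, f z * g z := by
  calc |∑ z, (f z + g z)| ≤ ∑ z, |f z + g z| := Finset.abs_sum_le_sum_abs _ _
    _ = ∑ z, (1 + f z * g z) := by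
        apply Finset.sum_congr rfl
        intro z _
        rcases hf z with h1 | h1 <;> rcases hg z with h2 | h2 <;> rw [h1, h2] <;> norm_num
    _ = (s:ℤ) + ∑ z, f z * g z := by
        rw [Finset.sum_add_distrib, Finset.sum_const, Finset.card_univ]
        simp

lemma had_dd {ζ s α : ℕ} (hζ : s + α = ζ) (hsζ : s ≤ ζ) (H : Matrix (Fin ζ) (Fin ζ) ℤ)
    (hpm : PMOne H) (hHH : H * Hᵀ = (ζ:ℤ) • (1 : Matrix (Fin ζ) (Fin ζ) ℤ))
    (x y : Fin s) (hxy : x ≠ y) :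
    ∑ z : Fin s, H (Fin.castLE hsζ x) (Fin.castLE hsζ z)
      * H (Fin.castLE hsζ y) (Fin.castLE hsζ z) ≤ (α:ℤ) := by
  classical
  set ι : Fin s → Fin ζ := Fin.castLE hsζ with hι
  have hιinj : Function.Injective ι := Fin.castLE_injective hsζ
  set F : Fin ζ → ℤ := fun w => H (ι x) w * H (ι y) w with hF
  have hfull : ∑ w, F w = 0 := by
    have h1 : (H * Hᵀ) (ι x) (ι y) = ∑ w, F w := by
      rw [Matrix.mul_apply]
      apply Finset.sum_congr rfl
      intro w _
      rw [Matrix.transpose_apply]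
    have h2 : (H * Hᵀ) (ι x) (ι y) = 0 := by
      rw [hHH, Matrix.smul_apply, Matrix.one_apply_ne (fun e => hxy (hιinj e))]
      simp
    rw [← h1, h2]
  set K := (univ : Finset (Fin s)).image ι with hK
  have hsplit : ∑ w ∈ univ \ K, F w + ∑ w ∈ K, F w = ∑ w, F w :=
    Finset.sum_sdiff (Finset.subset_univ K)
  have himg : ∑ w ∈ K, F w = ∑ z : Fin s, F (ι z) := Finset.sum_image (fun a _ b _ h => hιinj h)
  have hrestcard : (univ \ K).card = α := by
    rw [Finset.card_sdiff_of_subset (Finset.subset_univ K), Finset.card_univ,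
      Finset.card_image_of_injective _ hιinj, Finset.card_univ]
    simp only [Fintype.card_fin]
    omega
  have hrest : |∑ w ∈ univ \ K, F w| ≤ (α:ℤ) := by
    calc |∑ w ∈ univ \ K, F w| ≤ ∑ w ∈ univ \ K, |F w| := Finset.abs_sum_le_sum_abs _ _
      _ ≤ ∑ _w ∈ univ \ K, 1 := by
          apply Finset.sum_le_sum
          intro w _
          rcases hpm (ι x) w with h1 | h1 <;> rcases hpm (ι y) w with h2 | h2 <;>
            rw [hF] <;> simp [h1, h2]
      _ = (α:ℤ) := by rw [Finset.sum_const, hrestcard]; simp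
  have : ∑ z : Fin s, F (ι z) = - ∑ w ∈ univ \ K, F w := by
    rw [← himg]; omega
  rw [show (∑ z : Fin s, H (ι x) (ι z) * H (ι y) (ι z)) = ∑ z : Fin s, F (ι z) from rfl, this]
  have := abs_le.1 hrest
  omega

set_option maxHeartbeats 1000000 in
lemma no_arrows_s18 (m s α ζ : ℕ) (hζ : s + α = ζ)
    (V : Type) [Fintype V] [DecidableEq V] (G : SimpleGraph V) [DecidableRel G.Adj]
    (hG : G.IsSRGWith (4*m+5) (2*m+2) m (m+1))
    (H : Matrix (Fin ζ) (Fin ζ) ℤ) (hHsym : H.IsSymm) (hpm : PMOne H)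
    (hHH : H * Hᵀ = (ζ:ℤ) • (1 : Matrix (Fin ζ) (Fin ζ) ℤ)) :
    ¬ Arrows (4*m+5) s (ζ*(m+1)+1) 2 := by
  classical
  intro hA
  have hsζ : s ≤ ζ := by omega
  set ι : Fin s → Fin ζ := Fin.castLE hsζ with hι
  have hcard : Fintype.card V = 4*m+5 := hG.card
  set e : Fin (4*m+5) ≃ V := (Fintype.equivFinOfCardEq hcard).symm with he
  set ε : V → V → ℤ := fun p q => if G.Adj p q then 1 else -1 with hε
  set h : Fin s → Fin s → ℤ := fun x y => H (ι x) (ι y) with hh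
  have hεpm : ∀ p q : V, ε p q = 1 ∨ ε p q = -1 := by
    intro p q
    by_cases had : G.Adj p q <;> simp [hε, had]
  have hhpm : ∀ x y, h x y = 1 ∨ h x y = -1 := fun x y => hpm _ _
  have hεsym : ∀ p q : V, ε p q = ε q p := by
    intro p q
    by_cases had : G.Adj p q
    · simp [hε, had, had.symm]
    · rw [hε]; dsimp only
      rw [if_neg had, if_neg (fun hx => had hx.symm)]
  set C : (Fin (4*m+5) × Fin s) → (Fin (4*m+5) × Fin s) → Fin 2 :=
    fun p q => if ε (e p.1) (e q.1) * h p.2 q.2 = 1 then 0 else 1 with hC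
  have hCsym : ∀ p q, C p q = C q p := by
    intro p q
    have h2 : h p.2 q.2 = h q.2 p.2 := by
      rw [hh]; dsimp only
      exact (hHsym.apply (ι p.2) (ι q.2)).symm
    rw [hC]; dsimp only
    rw [hεsym (e p.1) (e q.1), h2]
  obtain ⟨i, a, b, S, hab, haS, hbS, hScard, hall⟩ := hA C hCsym
  set η : ℤ := 1 - 2*((i:ℕ):ℤ) with hη
  have hi2 : (i:ℕ) = 0 ∨ (i:ℕ) = 1 := by have := i.isLt; omega
  have hi : i = 0 ∨ i = 1 := by
    rcases hi2 with hv | hv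
    · left; exact Fin.ext hv
    · right; exact Fin.ext hv
  have hη2 : η * η = 1 := by rcases hi2 with hv | hv <;> rw [hη, hv] <;> norm_num
  set T := univ.filter (fun p : Fin (4*m+5) × Fin s =>
    p.1 ≠ a.1 ∧ p.1 ≠ b.1 ∧ C a p = i ∧ C b p = i) with hT
  have hST : S ⊆ T := by
    intro v hv
    obtain ⟨h1, h2, h3, h4⟩ := hall v hv
    have h1' : a.1 ≠ v.1 := h1
    have h2' : b.1 ≠ v.1 := h2
    exact Finset.mem_filter.2 ⟨Finset.mem_univ v, h1'.symm, h2'.symm, h3, h4⟩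
  have hScard' : S.card = ζ*(m+1)+1 := hScard
  have hNT : ζ*(m+1)+1 ≤ T.card := by
    have := Finset.card_le_card hST
    omega
  -- abbreviations
  set x := a.2 with hx
  set y := b.2 with hy
  set σ : Fin s → ℤ := fun x0 => ∑ z, h x0 z with hσ
  set dd : ℤ := ∑ z, h x z * h y z with hdd
  set ε1 : Fin (4*m+5) → ℤ := fun w => ε (e a.1) (e w) with hε1
  set ε2 : Fin (4*m+5) → ℤ := fun w => ε (e b.1) (e w) with hε2
  set W := ((univ : Finset (Fin (4*m+5))).erase a.1).erase b.1 with hW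
  -- T.card as a double sum over W
  have hTc : (T.card : ℤ) = ∑ w ∈ W, ∑ z,
      (if C a (w,z) = i ∧ C b (w,z) = i then (1:ℤ) else 0) := by
    have step1 : (T.card : ℤ) = ∑ w : Fin (4*m+5), ∑ z : Fin s,
        (if (w ≠ a.1 ∧ w ≠ b.1 ∧ C a (w,z) = i ∧ C b (w,z) = i) then (1:ℤ) else 0) := by
      rw [hT, Finset.card_filter]
      push_cast
      rw [Fintype.sum_prod_type]
    rw [step1]
    rw [← Finset.sum_subset (Finset.subset_univ W)]
    · apply Finset.sum_congr rfl
      intro w hw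
      have hw1 : w ≠ b.1 := (Finset.mem_erase.1 hw).1
      have hw2 : w ≠ a.1 := (Finset.mem_erase.1 ((Finset.mem_erase.1 hw).2)).1
      apply Finset.sum_congr rfl
      intro z _
      have hiff : (w ≠ a.1 ∧ w ≠ b.1 ∧ C a (w,z) = i ∧ C b (w,z) = i)
          ↔ (C a (w,z) = i ∧ C b (w,z) = i) := by
        constructor
        · exact fun hcc => hcc.2.2
        · exact fun hcc => ⟨hw2, hw1, hcc⟩
      rw [if_congr hiff rfl rfl]
    · intro w _ hw
      apply Finset.sum_eq_zero
      intro z _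
      rw [if_neg]
      intro hcc
      apply hw
      exact Finset.mem_erase.2 ⟨hcc.2.1, Finset.mem_erase.2 ⟨hcc.1, Finset.mem_univ w⟩⟩
  -- pointwise product formula
  have hkey : ∀ w : Fin (4*m+5), ∀ z : Fin s,
      (4:ℤ) * (if C a (w,z) = i ∧ C b (w,z) = i then (1:ℤ) else 0)
      = (1 + η * (ε1 w * h x z)) * (1 + η * (ε2 w * h y z)) := by
    intro w z
    have hCa : C a (w,z) = if ε1 w * h x z = 1 then 0 else 1 := rfl
    have hCb : C b (w,z) = if ε2 w * h y z = 1 then 0 else 1 := rfl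
    have hξ1 : ε1 w * h x z = 1 ∨ ε1 w * h x z = -1 := by
      rcases hεpm (e a.1) (e w) with h1 | h1 <;> rcases hhpm x z with h2 | h2 <;>
        rw [hε1] <;> dsimp only <;> rw [h1, h2] <;> norm_num
    have hξ2 : ε2 w * h y z = 1 ∨ ε2 w * h y z = -1 := by
      rcases hεpm (e b.1) (e w) with h1 | h1 <;> rcases hhpm y z with h2 | h2 <;>
        rw [hε2] <;> dsimp only <;> rw [h1, h2] <;> norm_num
    rw [hCa, hCb]
    rcases hi with hv | hv <;> subst hv <;>
      rcases hξ1 with h1 | h1 <;> rcases hξ2 with h2 | h2 <;>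
      rw [h1, h2] <;> rw [hη] <;> norm_num
  -- inner sum expansion
  have hinner : ∀ w : Fin (4*m+5),
      ∑ z, (1 + η * (ε1 w * h x z)) * (1 + η * (ε2 w * h y z))
      = (s:ℤ) + (η * σ x) * ε1 w + (η * σ y) * ε2 w + dd * (ε1 w * ε2 w) := by
    intro w
    have hp : ∀ z, (1 + η * (ε1 w * h x z)) * (1 + η * (ε2 w * h y z))
        = 1 + (η * ε1 w) * h x z + (η * ε2 w) * h y z
          + ((η*η) * (ε1 w * ε2 w)) * (h x z * h y z) := by
      intro z; ring
    rw [Finset.sum_congr rfl (fun z _ => hp z)]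
    rw [Finset.sum_add_distrib, Finset.sum_add_distrib, Finset.sum_add_distrib,
      ← Finset.mul_sum, ← Finset.mul_sum, ← Finset.mul_sum,
      Finset.sum_const, Finset.card_univ]
    rw [hη2]
    simp only [Fintype.card_fin, nsmul_eq_mul, mul_one, one_mul]
    rw [hσ]; dsimp only
    ring
  -- the total
  have htotal : (4:ℤ) * T.card
      = ∑ w ∈ W, ((s:ℤ) + (η * σ x) * ε1 w + (η * σ y) * ε2 w + dd * (ε1 w * ε2 w)) := by
    rw [hTc, Finset.mul_sum]
    apply Finset.sum_congr rfl
    intro w _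
    rw [Finset.mul_sum, Finset.sum_congr rfl (fun z _ => hkey w z), hinner w]
  -- transfer sums over W to sums over V
  have htrans : ∀ f : V → ℤ, ∑ w ∈ W, f (e w)
      = ∑ w' ∈ ((univ : Finset V).erase (e a.1)).erase (e b.1), f w' := by
    intro f
    rw [← Finset.sum_image (g := e) (f := f) (fun p _ q _ hpq => e.injective hpq)]
    congr 1
    rw [hW, Finset.image_erase e.injective, Finset.image_erase e.injective,
      Finset.image_univ_equiv]
  have habs : |σ x + σ y| ≤ (s:ℤ) + dd := by
    have := pm_sum_abs (fun z => h x z) (fun z => h y z) (fun z => hhpm x z) (fun z => hhpm y z)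
    rw [Finset.sum_add_distrib] at this
    exact this
  have hcastζ : ((s:ℤ) + (α:ℤ)) = (ζ:ℤ) := by exact_mod_cast congrArg (Nat.cast : ℕ → ℤ) hζ
  have hNT' : (4:ℤ)*((ζ:ℤ)*((m:ℤ)+1)+1) ≤ 4*T.card := by
    have : ((ζ*(m+1)+1 : ℕ) : ℤ) ≤ (T.card : ℤ) := by exact_mod_cast hNT
    push_cast at this ⊢
    linarith
  by_cases hab1 : a.1 = b.1
  -- same part
  · have hxy : x ≠ y := fun hxyeq => hab (Prod.ext hab1 hxyeq)
    have hdda : dd ≤ (α:ℤ) := had_dd hζ hsζ H hpm hHH x y hxy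
    have hWW : W = (univ : Finset (Fin (4*m+5))).erase a.1 := by
      rw [hW, ← hab1, Finset.erase_idem]
    have hWcard : W.card = 4*m+4 := by
      rw [hWW, Finset.card_erase_of_mem (Finset.mem_univ _), Finset.card_univ]
      simp only [Fintype.card_fin]
      omega
    have hc1 : ∑ w ∈ W, ε1 w = 0 := by
      simp only [hε1]
      rw [htrans (ε (e a.1)), ← hab1, Finset.erase_idem]
      exact sum_eps_erase G hG (e a.1)
    have hc2 : ∑ w ∈ W, ε2 w = 0 := by
      have : ∀ w, ε2 w = ε1 w := by intro w; rw [hε1, hε2, ← hab1]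
      rw [Finset.sum_congr rfl (fun w _ => this w)]
      exact hc1
    have hc12 : ∑ w ∈ W, ε1 w * ε2 w = ((4*m+4 : ℕ):ℤ) := by
      have hone : ∀ w, ε1 w * ε2 w = 1 := by
        intro w
        have h21 : ε2 w = ε1 w := by rw [hε1, hε2, ← hab1]
        rw [h21]
        rcases hεpm (e a.1) (e w) with h1 | h1 <;> rw [hε1] <;> dsimp only <;>
          rw [h1] <;> norm_num
      rw [Finset.sum_congr rfl (fun w _ => hone w), Finset.sum_const, hWcard]
      simp
    have hval : (4:ℤ) * T.card = ((4*m+4 : ℕ):ℤ) * ((s:ℤ) + dd) := by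
      rw [htotal, Finset.sum_add_distrib, Finset.sum_add_distrib, Finset.sum_add_distrib,
        ← Finset.mul_sum, ← Finset.mul_sum, ← Finset.mul_sum, hc1, hc2, hc12,
        Finset.sum_const, hWcard]
      push_cast
      ring
    have hfin : (4:ℤ) * T.card ≤ (4*(m:ℤ)+4) * ((s:ℤ) + (α:ℤ)) := by
      rw [hval]
      have hcoeff : (0:ℤ) ≤ ((4*m+4 : ℕ):ℤ) := by positivity
      have := mul_le_mul_of_nonneg_left (by linarith : (s:ℤ) + dd ≤ (s:ℤ) + (α:ℤ)) hcoeff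
      calc ((4*m+4 : ℕ):ℤ) * ((s:ℤ) + dd) ≤ ((4*m+4 : ℕ):ℤ) * ((s:ℤ) + (α:ℤ)) := this
        _ = (4*(m:ℤ)+4) * ((s:ℤ) + (α:ℤ)) := by push_cast; ring
    rw [hcastζ] at hfin
    nlinarith [hNT', hfin]
  -- different parts
  · have hne' : e a.1 ≠ e b.1 := fun hq => hab1 (e.injective hq)
    set E : ℤ := ε (e a.1) (e b.1) with hE
    have hbmem : b.1 ∈ (univ : Finset (Fin (4*m+5))).erase a.1 :=
      Finset.mem_erase.2 ⟨Ne.symm hab1, Finset.mem_univ _⟩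
    have hWcard : W.card = 4*m+3 := by
      rw [hW, Finset.card_erase_of_mem hbmem, Finset.card_erase_of_mem (Finset.mem_univ _),
        Finset.card_univ]
      simp only [Fintype.card_fin]
      omega
    have hc1 : ∑ w ∈ W, ε1 w = -E := by
      simp only [hε1]
      rw [htrans (ε (e a.1))]
      exact sum_eps_erase2 G hG hne'
    have hc2 : ∑ w ∈ W, ε2 w = -E := by
      simp only [hε2]
      rw [htrans (ε (e b.1)), Finset.erase_right_comm]
      have h0 : ∑ w ∈ ((univ : Finset V).erase (e b.1)).erase (e a.1), ε (e b.1) w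
          = - ε (e b.1) (e a.1) := sum_eps_erase2 G hG hne'.symm
      rw [h0, hεsym (e b.1) (e a.1)]
    have hc12 : ∑ w ∈ W, ε1 w * ε2 w = -1 := by
      simp only [hε1, hε2]
      rw [htrans (fun w' => ε (e a.1) w' * ε (e b.1) w')]
      exact sum_epsprod G hG hne'
    have hval : (4:ℤ) * T.card = ((4*m+3 : ℕ):ℤ) * s - (η * E) * (σ x + σ y) - dd := by
      rw [htotal, Finset.sum_add_distrib, Finset.sum_add_distrib, Finset.sum_add_distrib,
        ← Finset.mul_sum, ← Finset.mul_sum, ← Finset.mul_sum, hc1, hc2, hc12,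
        Finset.sum_const, hWcard]
      push_cast
      ring
    have hηE : η * E = 1 ∨ η * E = -1 := by
      have hEpm : E = 1 ∨ E = -1 := hεpm _ _
      rcases hi2 with hv | hv <;> rcases hEpm with h1 | h1 <;> rw [hη, h1, hv] <;> norm_num
    have hbound : -(η * E) * (σ x + σ y) ≤ (s:ℤ) + dd := by
      rcases hηE with h1 | h1 <;> rw [h1]
      · calc -(1:ℤ) * (σ x + σ y) = -(σ x + σ y) := by ring
          _ ≤ |σ x + σ y| := neg_le_abs _
          _ ≤ (s:ℤ) + dd := habs
      · calc -(-1:ℤ) * (σ x + σ y) = (σ x + σ y) := by ring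
          _ ≤ |σ x + σ y| := le_abs_self _
          _ ≤ (s:ℤ) + dd := habs
    have hfin : (4:ℤ) * T.card ≤ (4*(m:ℤ)+4) * (ζ:ℤ) := by
      have hsle' : (s:ℤ) ≤ (ζ:ℤ) := by exact_mod_cast hsζ
      have h4 : (4:ℤ)*T.card ≤ ((4*m+3 : ℕ):ℤ) * s + ((s:ℤ) + dd) - dd := by
        rw [hval]
        linarith [hbound]
      have heq : ((4*m+3:ℕ):ℤ) * s + ((s:ℤ)+dd) - dd = (4*(m:ℤ)+4)*(s:ℤ) := by
        push_cast
        ring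
      rw [heq] at h4
      calc (4:ℤ)*T.card ≤ (4*(m:ℤ)+4)*(s:ℤ) := h4
        _ ≤ (4*(m:ℤ)+4)*(ζ:ℤ) := by nlinarith [hsle']
    nlinarith [hNT', hfin]


end AuxProof

/-- **Example (exact set multipartite Ramsey number from a deleted Hadamard matrix).**
Let `n ≥ 2`. Suppose there exist a strongly regular graph with parameters
`(4n-3, 2n-2, n-2, n-1)` and a symmetric Hadamard matrix of order `ζ`, where `ζ - α` is even,
`0 ≤ α ≤ ζ/2`, and `ζ - α > (√2+1)(2n-1)(4αn-4α+1)`. Then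
`M_{ζ-α}(K_{2, ζ(n-1)+1}; 2) = 4n-2`. -/
theorem statement18 (n ζ α : ℕ) (hn : 2 ≤ n)
    (hSRG : ∃ (V : Type) (_ : Fintype V) (G : SimpleGraph V) (_ : DecidableRel G.Adj),
      G.IsSRGWith (4 * n - 3) (2 * n - 2) (n - 2) (n - 1))
    (hHad : ∃ H : Matrix (Fin ζ) (Fin ζ) ℤ, H.IsSymm ∧ _root_.IsHadamard H)
    (heven : Even (ζ - α)) (hαζ : (α : ℚ) ≤ (ζ : ℚ) / 2)
    (hbig : ((ζ - α : ℕ) : ℝ) >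
      (Real.sqrt 2 + 1) * (2 * (n : ℝ) - 1) * (4 * (α : ℝ) * n - 4 * α + 1)) :
    setRamsey (ζ - α) (ζ * (n - 1) + 1) 2 = 4 * n - 2 := by

  classical
  obtain ⟨m, rfl⟩ : ∃ m, n = m + 2 := ⟨n - 2, by omega⟩
  have hαle : 2*α ≤ ζ := by
    have h : ((2*α : ℕ) : ℚ) ≤ (ζ:ℚ) := by push_cast; linarith
    exact_mod_cast h
  have hζs : (ζ - α) + α = ζ := by omega
  set B := (2*m+3)*(4*α*(m+1)+1) with hB
  have hBpos : 0 < B := by positivity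
  have hsqrt : (1:ℝ) < Real.sqrt 2 := by
    nlinarith [Real.sq_sqrt (show (0:ℝ) ≤ 2 by norm_num), Real.sqrt_nonneg 2]
  have hsB : 2*B < ζ - α := by
    have hBr : ((B:ℕ):ℝ) = (2*(((m:ℕ):ℝ)+2) - 1) * (4*(α:ℝ)*(((m:ℕ):ℝ)+2) - 4*(α:ℝ) + 1) := by
      rw [hB]; push_cast; ring
    have h1 : ((ζ - α : ℕ):ℝ) > (Real.sqrt 2 + 1) * (B:ℝ) := by
      rw [hBr, ← mul_assoc]
      have hmc : ((m+2 : ℕ):ℝ) = ((m:ℕ):ℝ)+2 := by push_cast; ring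
      rw [← hmc]
      exact hbig
    have h2 : (2:ℝ)*(B:ℝ) ≤ (Real.sqrt 2 + 1)*(B:ℝ) := by
      have hB0 : (0:ℝ) ≤ (B:ℝ) := by positivity
      nlinarith
    have h3 : ((2*B : ℕ):ℝ) < ((ζ-α:ℕ):ℝ) := by push_cast; linarith
    exact_mod_cast h3
  have hspos : 0 < ζ - α := by omega
  obtain ⟨V, hVfin, G, hGdec, hG⟩ := hSRG
  letI : Fintype V := hVfin
  letI : DecidableRel G.Adj := hGdec
  letI : DecidableEq V := Classical.decEq V
  have hG' : G.IsSRGWith (4*m+5) (2*m+2) m (m+1) := by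
    have e1 : 4*(m+2)-3 = 4*m+5 := by omega
    have e2 : 2*(m+2)-2 = 2*m+2 := by omega
    have e3 : (m+2)-2 = m := by omega
    have e4 : (m+2)-1 = m+1 := by omega
    rw [e1, e2, e3, e4] at hG
    exact hG
  obtain ⟨H, hHsym, hpm, hHH⟩ := hHad
  rw [Fintype.card_fin] at hHH
  have hnoA := no_arrows_s18 m (ζ-α) α ζ hζs V G hG' H hHsym hpm hHH
  have hupper : Arrows (4*m+6) (ζ-α) (ζ*(m+1)+1) 2 := by
    apply arrows_of_count_s18 (4*m+6) (ζ-α) (ζ*(m+1)+1) (by omega) hspos (by omega)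
    have hsB' : 2*((2*m+3)*(4*α*(m+1)+1)) < ζ - α := by rw [← hB]; exact hsB
    have hζZ : (ζ:ℤ) = ((ζ-α:ℕ):ℤ) + (α:ℤ) := by
      exact_mod_cast (congrArg (Nat.cast : ℕ → ℤ) hζs).symm
    have htB : 2*((2*(m:ℤ)+3)*(4*(α:ℤ)*((m:ℤ)+1)+1)) < ((ζ-α:ℕ):ℤ) := by
      exact_mod_cast hsB'
    have ht0 : (0:ℤ) ≤ ((ζ-α:ℕ):ℤ) := by positivity
    have hα0 : (0:ℤ) ≤ (α:ℤ) := by positivity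
    have hm0 : (0:ℤ) ≤ (m:ℤ) := by positivity
    have hBposZ : (0:ℤ) < (2*(m:ℤ)+3)*(4*(α:ℤ)*((m:ℤ)+1)+1) := by positivity
    push_cast
    rw [hζZ]
    push_cast
    nlinarith [mul_pos (show (0:ℤ) < ((ζ-α:ℕ):ℤ) by linarith)
      (show (0:ℤ) < ((ζ-α:ℕ):ℤ) - 2*((2*(m:ℤ)+3)*(4*(α:ℤ)*((m:ℤ)+1)+1)) by linarith),
      mul_nonneg hα0 hm0]
  have e5 : m+2-1 = m+1 := by omega
  have e6 : 4*(m+2)-2 = 4*m+6 := by omega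
  rw [e5, e6]
  unfold setRamsey
  apply le_antisymm
  · exact Nat.sInf_le ⟨by omega, hupper⟩
  · refine le_csInf ⟨4*m+6, by omega, hupper⟩ ?_
    rintro c ⟨hc0, hcA⟩
    by_contra hlt
    push_neg at hlt
    exact hnoA (arrows_mono (by omega) hcA)
end
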